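/- arXiv:1612.06480 — 9 statements merged into one kernel-verified Lean document; each statement's English description precedes it below -/
import Mathlib

section
/- Let s ∈ ℂ with Re(s) > 2. Then the doubly-indexed family over (i, k) ∈ I × {k ∈ ℕ : k ≥ 1} given by (1 − exp(−s·k·ℓ i)) is multipliable, i.e. the infinite product ∏_{i ∈ I} ∏_{k=1}^{∞} (1 − exp(−s·k·ℓ i)) converges absolutely. -/
set_option maxHeartbeats 1000000

open Filter Real

/-- absolute convergence of the double infinite product
`∏_{i ∈ I} ∏_{k ≥ 1} (1 − exp(−s·k·ℓ i))` for `Re(s) > 2`. -/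
theorem statement0 {I : Type*} [Countable I] (ℓ θ : I → ℝ)
    (hℓ : ∀ i, 0 < ℓ i) (δ : ℝ) (hδ : δ < 2)
    (hsum : Summable fun i => Real.exp (-δ * ℓ i))
    (s : ℂ) (hs : 2 < s.re) :
    Multipliable (fun p : I × {k : ℕ // 1 ≤ k} =>
      (1 - Complex.exp (-s * ((p.2 : ℕ) : ℂ) * (ℓ p.1 : ℂ)))) := by
  set r := s.re with hr
  -- The set of indices with small `ℓ` is finite.
  have hfin : {i : I | ℓ i < 1}.Finite := by
    have h0 : Tendsto (fun i => Real.exp (-δ * ℓ i)) cofinite (nhds 0) :=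
      hsum.tendsto_cofinite_zero
    have hev : ∀ᶠ i in cofinite, Real.exp (-δ * ℓ i) < Real.exp (-|δ|) :=
      h0.eventually_lt_const (Real.exp_pos _)
    rw [Filter.eventually_cofinite] at hev
    refine hev.subset fun i hi => ?_
    simp only [Set.mem_setOf_eq, not_lt]
    apply Real.exp_le_exp.2
    have h1 := (hℓ i).le
    have h2 : ℓ i ≤ 1 := le_of_lt hi
    nlinarith [le_abs_self δ, abs_nonneg δ]
  set T : Finset I := hfin.toFinset with hT
  -- the geometric ratio
  set q₀ : NNReal := T.sup fun i => ⟨Real.exp (-r * ℓ i), (Real.exp_pos _).le⟩ with hq₀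
  set q : ℝ := max (Real.exp (2 - r)) q₀ with hq
  have hq₀lt : (q₀ : ℝ) < 1 := by
    have : q₀ < 1 := by
      apply Finset.sup_lt_iff (by norm_num : (⊥ : NNReal) < 1) |>.2
      intro i _
      have : Real.exp (-r * ℓ i) < 1 := by
        rw [Real.exp_lt_one_iff]
        have := hℓ i
        nlinarith
      exact_mod_cast this
    exact_mod_cast this
  have hq1 : q < 1 := by
    apply max_lt _ hq₀lt
    rw [Real.exp_lt_one_iff]; linarith
  have hq0 : 0 < q := lt_of_lt_of_le (Real.exp_pos _) (le_max_left _ _)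
  -- the summable majorant in `i`
  set M : I → ℝ := fun i => if ℓ i < 1 then 1 else Real.exp (-δ * ℓ i) with hM
  have hMsum : Summable M := by
    apply hsum.congr_cofinite
    rw [Filter.eventuallyEq_iff_exists_mem]
    exact ⟨{i | ℓ i < 1}ᶜ, by rwa [Filter.mem_cofinite, compl_compl],
      fun i hi => by simp only [hM]; rw [if_neg (not_lt.2 (by simpa using hi))]⟩
  have hMnonneg : ∀ i, 0 ≤ M i := by
    intro i; simp only [hM]; split <;> positivity
  -- geometric series over the subtype
  have hgeom : Summable fun k : {k : ℕ // 1 ≤ k} => q ^ (k : ℕ) :=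
    (summable_geometric_of_lt_one hq0.le hq1).comp_injective Subtype.val_injective
  -- the summable majorant on the product
  have hFm : Summable fun p : I × {k : ℕ // 1 ≤ k} => M p.1 * q ^ ((p.2 : ℕ)) :=
    hMsum.mul_of_nonneg hgeom hMnonneg fun k => by positivity
  -- the norms `exp (-r k ℓ i)` are summable
  set F : I × {k : ℕ // 1 ≤ k} → ℝ := fun p => Real.exp (-r * (p.2 : ℕ) * ℓ p.1) with hF
  have hFsum : Summable F := by
    apply Summable.of_nonneg_of_le (fun p => (Real.exp_pos _).le) _ hFm
    rintro ⟨i, k, hk⟩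
    simp only [hF, hM]
    have hk1 : (1 : ℝ) ≤ (k : ℝ) := by exact_mod_cast hk
    by_cases hi : ℓ i < 1
    · rw [if_pos hi, one_mul]
      have : Real.exp (-r * (k : ℕ) * ℓ i) = (Real.exp (-r * ℓ i)) ^ (k : ℕ) := by
        rw [← Real.exp_nat_mul]; ring_nf
      rw [this]
      apply pow_le_pow_left₀ (Real.exp_pos _).le
      have hmem : i ∈ T := by rw [hT, Set.Finite.mem_toFinset]; exact hi
      have hle : (⟨Real.exp (-r * ℓ i), (Real.exp_pos _).le⟩ : NNReal) ≤ q₀ :=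
        Finset.le_sup (f := fun i => (⟨Real.exp (-r * ℓ i), (Real.exp_pos _).le⟩ : NNReal)) hmem
      calc Real.exp (-r * ℓ i) ≤ (q₀ : ℝ) := by exact_mod_cast hle
        _ ≤ q := le_max_right _ _
    · rw [if_neg hi]
      push_neg at hi
      calc Real.exp (-r * (k : ℕ) * ℓ i)
          ≤ Real.exp (-δ * ℓ i) * Real.exp ((2 - r) * (k : ℕ)) := by
            rw [← Real.exp_add]
            apply Real.exp_le_exp.2
            nlinarith [mul_nonneg (sub_nonneg.2 hk1) (by nlinarith : (0:ℝ) ≤ r * ℓ i - r + 2),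
              mul_nonneg (sub_nonneg.2 hi) (by linarith : (0:ℝ) ≤ r - δ)]
        _ ≤ Real.exp (-δ * ℓ i) * q ^ (k : ℕ) := by
            apply mul_le_mul_of_nonneg_left _ (Real.exp_pos _).le
            rw [mul_comm, Real.exp_nat_mul]
            exact pow_le_pow_left₀ (Real.exp_pos _).le (le_max_left _ _) _
  -- the norm of each exponential is `F p`
  have hnorm : ∀ p : I × {k : ℕ // 1 ≤ k},
      ‖Complex.exp (-s * ((p.2 : ℕ) : ℂ) * (ℓ p.1 : ℂ))‖ = F p := by
    rintro ⟨i, k, hk⟩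
    rw [Complex.norm_exp]
    congr 1
    simp [Complex.mul_re, hF, hr]
  have hFlt : ∀ p : I × {k : ℕ // 1 ≤ k}, F p < 1 := by
    rintro ⟨i, k, hk⟩
    rw [hF, Real.exp_lt_one_iff]
    show -r * (k : ℝ) * ℓ i < 0
    have hk1 : (1 : ℝ) ≤ (k : ℝ) := by exact_mod_cast hk
    have h2 := hℓ i
    nlinarith [mul_pos (mul_pos (show (0:ℝ) < r by linarith) (show (0:ℝ) < (k:ℝ) by linarith)) h2]
  -- each factor is nonzero
  have hne : ∀ p : I × {k : ℕ // 1 ≤ k},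
      (1 : ℂ) - Complex.exp (-s * ((p.2 : ℕ) : ℂ) * (ℓ p.1 : ℂ)) ≠ 0 := by
    intro p h
    rw [sub_eq_zero] at h
    have h2 := hFlt p
    rw [← hnorm p, ← h, norm_one] at h2
    exact lt_irrefl _ h2
  -- the logs are summable
  have hlog : Summable fun p : I × {k : ℕ // 1 ≤ k} =>
      Complex.log (1 - Complex.exp (-s * ((p.2 : ℕ) : ℂ) * (ℓ p.1 : ℂ))) := by
    apply Summable.of_norm_bounded_eventually (g := fun p => 3/2 * F p) (hFsum.mul_left _)
    have hsmall : ∀ᶠ p in cofinite, F p ≤ 1/2 := by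
      filter_upwards [hFsum.tendsto_cofinite_zero.eventually_lt_const
        (by norm_num : (0:ℝ) < 1/2)] with p hp using hp.le
    filter_upwards [hsmall] with p hp
    have h1 : (1 : ℂ) - Complex.exp (-s * ((p.2 : ℕ) : ℂ) * (ℓ p.1 : ℂ))
        = 1 + -Complex.exp (-s * ((p.2 : ℕ) : ℂ) * (ℓ p.1 : ℂ)) := by ring
    rw [h1]
    have := Complex.norm_log_one_add_half_le_self
      (z := -Complex.exp (-s * ((p.2 : ℕ) : ℂ) * (ℓ p.1 : ℂ)))
      (by rw [norm_neg, hnorm p]; exact hp)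
    rw [norm_neg, hnorm p] at this
    exact this
  exact ⟨_, (hlog.hasSum.cexp).congr_fun fun p => (Complex.exp_log (hne p)).symm⟩
end

section
/- Let k ∈ ℤ and s ∈ ℂ with Re(s) > 2. Then: (a) the family over i ∈ I given by (1 − exp(i(k/2)·θ i)·exp(−s·ℓ i)) is multipliable and its product R(k, s) is nonzero; (b) the family over (i, p, q) ∈ I × ℕ × ℕ given by (1 − exp(i(k/2)·θ i)·exp(−p(ℓ i + i·θ i))·exp(−q(ℓ i − i·θ i))·exp(−s·ℓ i)) is multipliable and its product Z(k, s) is nonzero. -/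
open Complex Filter

/-- Infinite products `∏ (1 - a j)` with `∑ ‖a j‖ < ∞` and `‖a j‖ < 1` converge and are
nonzero. -/
lemma aux_prod {J : Type*} (a : J → ℂ) (h1 : ∀ j, ‖a j‖ < 1)
    (hs : Summable fun j => ‖a j‖) :
    Multipliable (fun j => 1 - a j) ∧ (∏' j, (1 - a j)) ≠ 0 := by
  have hne : ∀ j, 1 - a j ≠ 0 := by
    intro j h
    have ha : a j = 1 := by linear_combination -h
    simpa [ha] using h1 j
  have hlog : Summable fun j => Complex.log (1 - a j) := by
    have hev : ∀ᶠ j in Filter.cofinite, ‖Complex.log (1 - a j)‖ ≤ 3/2 * ‖a j‖ := by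
      have h2 := hs.tendsto_cofinite_zero.eventually
        (gt_mem_nhds (by norm_num : (0:ℝ) < 1/2))
      filter_upwards [h2] with j hj
      have hn : ‖-a j‖ ≤ 1/2 := by rw [norm_neg]; exact le_of_lt hj
      simpa [sub_eq_add_neg, norm_neg] using Complex.norm_log_one_add_half_le_self hn
    exact Summable.of_norm_bounded_eventually (hs.mul_left (3/2)) hev
  have key := Complex.cexp_tsum_eq_tprod (f := fun j => 1 - a j) hne hlog
  have hkey := key
  refine ⟨Complex.multipliable_of_summable_log hlog, ?_⟩
  rw [← hkey]
  exact Complex.exp_ne_zero _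

lemma aux_finite {I : Type*} (ℓ : I → ℝ) (hℓ : ∀ i, 0 < ℓ i) (δ : ℝ)
    (hsum : Summable fun i => Real.exp (-δ * ℓ i)) :
    {i : I | ℓ i ≤ 1}.Finite := by
  have h : ∀ᶠ i in cofinite, Real.exp (-δ * ℓ i) < Real.exp (min 0 (-δ)) :=
    hsum.tendsto_cofinite_zero.eventually (gt_mem_nhds (Real.exp_pos _))
  rw [eventually_cofinite] at h
  apply h.subset
  intro i (hi : ℓ i ≤ 1)
  have hli := hℓ i
  simp only [Set.mem_setOf_eq, not_lt, Real.exp_le_exp]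
  rcases le_or_gt 0 δ with h0 | h0
  · have := min_le_right (0:ℝ) (-δ); nlinarith
  · have := min_le_left (0:ℝ) (-δ); nlinarith

/-- `R(σ_k, s) = ∏_{i ∈ I} (1 − e^{i(k/2)θ_i} e^{−s ℓ_i})`. -/
noncomputable def Rz {I : Type*} (ℓ θ : I → ℝ) (k : ℤ) (s : ℂ) : ℂ :=
  ∏' i : I, (1 - Complex.exp (Complex.I * ((k : ℂ) / 2) * (θ i : ℂ))
    * Complex.exp (-s * (ℓ i : ℂ)))

/-- Selberg zeta function
`Z(σ_k, s) = ∏_{i ∈ I} ∏_{p,q ≥ 0} (1 − e^{i(k/2)θ_i} e^{−p(ℓ_i+iθ_i)} e^{−q(ℓ_i−iθ_i)} e^{−s ℓ_i})`. -/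
noncomputable def Zs {I : Type*} (ℓ θ : I → ℝ) (k : ℤ) (s : ℂ) : ℂ :=
  ∏' x : I × ℕ × ℕ,
    (1 - Complex.exp (Complex.I * ((k : ℂ) / 2) * (θ x.1 : ℂ))
       * Complex.exp (-(x.2.1 : ℂ) * ((ℓ x.1 : ℂ) + Complex.I * (θ x.1 : ℂ)))
       * Complex.exp (-(x.2.2 : ℂ) * ((ℓ x.1 : ℂ) - Complex.I * (θ x.1 : ℂ)))
       * Complex.exp (-s * (ℓ x.1 : ℂ)))

/-- for `Re(s) > 2`, the products defining `R(k,s)` and `Z(k,s)` converge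
absolutely and are nonzero. -/
theorem statement1 {I : Type*} [Countable I] (ℓ θ : I → ℝ)
    (hℓ : ∀ i, 0 < ℓ i) (δ : ℝ) (hδ : δ < 2)
    (hsum : Summable fun i => Real.exp (-δ * ℓ i))
    (k : ℤ) (s : ℂ) (hs : 2 < s.re) :
    (Multipliable fun i : I =>
      (1 - Complex.exp (Complex.I * ((k : ℂ) / 2) * (θ i : ℂ))
        * Complex.exp (-s * (ℓ i : ℂ)))) ∧
    Rz ℓ θ k s ≠ 0 ∧
    (Multipliable fun x : I × ℕ × ℕ =>
      (1 - Complex.exp (Complex.I * ((k : ℂ) / 2) * (θ x.1 : ℂ))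
         * Complex.exp (-(x.2.1 : ℂ) * ((ℓ x.1 : ℂ) + Complex.I * (θ x.1 : ℂ)))
         * Complex.exp (-(x.2.2 : ℂ) * ((ℓ x.1 : ℂ) - Complex.I * (θ x.1 : ℂ)))
         * Complex.exp (-s * (ℓ x.1 : ℂ)))) ∧
    Zs ℓ θ k s ≠ 0 := by
  -- the R factors
  set aR : I → ℂ := fun i => Complex.exp (Complex.I * ((k : ℂ) / 2) * (θ i : ℂ))
    * Complex.exp (-s * (ℓ i : ℂ)) with haR
  have hnormR : ∀ i, ‖aR i‖ = Real.exp (-(s.re * ℓ i)) := by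
    intro i
    simp [haR, Complex.norm_exp, ← Real.exp_add, Complex.mul_re]
  have hR1 : ∀ i, ‖aR i‖ < 1 := by
    intro i
    rw [hnormR i]
    apply Real.exp_lt_one_iff.mpr
    nlinarith [hℓ i]
  have hRs : Summable fun i => ‖aR i‖ := by
    apply Summable.of_nonneg_of_le (fun i => norm_nonneg _) (fun i => ?_) hsum
    rw [hnormR i, Real.exp_le_exp]
    nlinarith [hℓ i]
  obtain ⟨hRm, hRne⟩ := aux_prod aR hR1 hRs
  -- the Z factors
  set aZ : I × ℕ × ℕ → ℂ := fun x => Complex.exp (Complex.I * ((k : ℂ) / 2) * (θ x.1 : ℂ))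
       * Complex.exp (-(x.2.1 : ℂ) * ((ℓ x.1 : ℂ) + Complex.I * (θ x.1 : ℂ)))
       * Complex.exp (-(x.2.2 : ℂ) * ((ℓ x.1 : ℂ) - Complex.I * (θ x.1 : ℂ)))
       * Complex.exp (-s * (ℓ x.1 : ℂ)) with haZ
  have hnormZ : ∀ x : I × ℕ × ℕ, ‖aZ x‖ =
      Real.exp (-(s.re * ℓ x.1)) * Real.exp (-ℓ x.1) ^ x.2.1 * Real.exp (-ℓ x.1) ^ x.2.2 := by
    intro x
    simp [haZ, Complex.norm_exp, ← Real.exp_add, ← Real.exp_nat_mul,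
      Complex.mul_re]
    ring_nf
  have hZ1 : ∀ x, ‖aZ x‖ < 1 := by
    intro x
    rw [hnormZ x]
    have h1 : Real.exp (-(s.re * ℓ x.1)) < 1 := Real.exp_lt_one_iff.mpr (by nlinarith [hℓ x.1])
    have h2 : Real.exp (-ℓ x.1) ^ x.2.1 ≤ 1 :=
      pow_le_one₀ (Real.exp_nonneg _) (Real.exp_le_one_iff.mpr (by nlinarith [hℓ x.1]))
    have h3 : Real.exp (-ℓ x.1) ^ x.2.2 ≤ 1 :=
      pow_le_one₀ (Real.exp_nonneg _) (Real.exp_le_one_iff.mpr (by nlinarith [hℓ x.1]))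
    have hb : Real.exp (-(s.re * ℓ x.1)) * Real.exp (-ℓ x.1) ^ x.2.1
        ≤ Real.exp (-(s.re * ℓ x.1)) :=
      mul_le_of_le_one_right (Real.exp_pos _).le h2
    have hc : Real.exp (-(s.re * ℓ x.1)) * Real.exp (-ℓ x.1) ^ x.2.1 * Real.exp (-ℓ x.1) ^ x.2.2
        ≤ Real.exp (-(s.re * ℓ x.1)) * Real.exp (-ℓ x.1) ^ x.2.1 :=
      mul_le_of_le_one_right (mul_nonneg (Real.exp_nonneg _)
        (pow_nonneg (Real.exp_nonneg _) _)) h3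
    linarith
  have hZs : Summable fun x => ‖aZ x‖ := by
    have hr : ∀ i : I, Real.exp (-ℓ i) < 1 :=
      fun i => Real.exp_lt_one_iff.mpr (by nlinarith [hℓ i])
    have hrn : ∀ i : I, (0:ℝ) ≤ Real.exp (-ℓ i) := fun i => Real.exp_nonneg _
    -- summability of the (p,q)-fibers
    have hfib : ∀ i : I, Summable fun pq : ℕ × ℕ =>
        Real.exp (-(s.re * ℓ i)) * Real.exp (-ℓ i) ^ pq.1 * Real.exp (-ℓ i) ^ pq.2 := by
      intro i
      have hg : Summable fun n : ℕ => Real.exp (-ℓ i) ^ n :=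
        summable_geometric_of_lt_one (hrn i) (hr i)
      have := (hg.mul_of_nonneg hg (fun n => pow_nonneg (hrn i) n)
        (fun n => pow_nonneg (hrn i) n)).mul_left (Real.exp (-(s.re * ℓ i)))
      convert this using 2 with pq
      · rfl
      ring
    simp only [funext hnormZ]
    rw [summable_prod_of_nonneg (by
      intro x
      positivity)]
    refine ⟨fun i => hfib i, ?_⟩
    -- the outer sum over I
    set K : ℝ := ∑' pq : ℕ × ℕ, Real.exp (-1:ℝ) ^ pq.1 * Real.exp (-1:ℝ) ^ pq.2 with hK
    have hgK : Summable fun pq : ℕ × ℕ => Real.exp (-1:ℝ) ^ pq.1 * Real.exp (-1:ℝ) ^ pq.2 := by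
      have hg : Summable fun n : ℕ => Real.exp (-1:ℝ) ^ n :=
        summable_geometric_of_lt_one (Real.exp_nonneg _)
          (Real.exp_lt_one_iff.mpr (by norm_num))
      exact hg.mul_of_nonneg hg (fun n => pow_nonneg (Real.exp_nonneg _) n)
        (fun n => pow_nonneg (Real.exp_nonneg _) n)
    apply Summable.of_norm_bounded_eventually (g := fun i => Real.exp (-δ * ℓ i) * K)
      (hsum.mul_right K)
    -- the exceptional set is contained in the finite set of small ℓ
    rw [eventually_cofinite]
    apply (aux_finite ℓ hℓ δ hsum).subset
    intro i hi
    by_contra hcon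
    apply hi
    -- now ℓ i > 1; establish the bound
    simp only [Set.mem_setOf_eq, not_le] at hcon
    have hl1 : (1:ℝ) < ℓ i := hcon
    have hnn : (0:ℝ) ≤ ∑' pq : ℕ × ℕ,
        Real.exp (-(s.re * ℓ i)) * Real.exp (-ℓ i) ^ pq.1 * Real.exp (-ℓ i) ^ pq.2 :=
      tsum_nonneg (fun pq => by positivity)
    rw [Real.norm_of_nonneg hnn]
    have hle : ∀ pq : ℕ × ℕ,
        Real.exp (-(s.re * ℓ i)) * Real.exp (-ℓ i) ^ pq.1 * Real.exp (-ℓ i) ^ pq.2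
          ≤ Real.exp (-δ * ℓ i) * (Real.exp (-1:ℝ) ^ pq.1 * Real.exp (-1:ℝ) ^ pq.2) := by
      intro pq
      have h1 : Real.exp (-(s.re * ℓ i)) ≤ Real.exp (-δ * ℓ i) := by
        rw [Real.exp_le_exp]; nlinarith [hℓ i]
      have h2 : Real.exp (-ℓ i) ≤ Real.exp (-1:ℝ) := by
        rw [Real.exp_le_exp]; linarith
      have h3 : Real.exp (-ℓ i) ^ pq.1 ≤ Real.exp (-1:ℝ) ^ pq.1 :=
        pow_le_pow_left₀ (hrn i) h2 _
      have h4 : Real.exp (-ℓ i) ^ pq.2 ≤ Real.exp (-1:ℝ) ^ pq.2 :=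
        pow_le_pow_left₀ (hrn i) h2 _
      have e1 := Real.exp_pos (-(s.re * ℓ i))
      have e2 := Real.exp_pos (-δ * ℓ i)
      have p1 := pow_nonneg (hrn i) pq.1
      have p2 := pow_nonneg (hrn i) pq.2
      have q1 := pow_nonneg (Real.exp_nonneg (-1:ℝ)) pq.1
      have q2 := pow_nonneg (Real.exp_nonneg (-1:ℝ)) pq.2
      calc Real.exp (-(s.re * ℓ i)) * Real.exp (-ℓ i) ^ pq.1 * Real.exp (-ℓ i) ^ pq.2
          ≤ Real.exp (-δ * ℓ i) * Real.exp (-1:ℝ) ^ pq.1 * Real.exp (-1:ℝ) ^ pq.2 := by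
            apply mul_le_mul (mul_le_mul h1 h3 p1 e2.le) h4 p2 (by positivity)
        _ = Real.exp (-δ * ℓ i) * (Real.exp (-1:ℝ) ^ pq.1 * Real.exp (-1:ℝ) ^ pq.2) := by ring
    calc (∑' pq : ℕ × ℕ,
        Real.exp (-(s.re * ℓ i)) * Real.exp (-ℓ i) ^ pq.1 * Real.exp (-ℓ i) ^ pq.2)
        ≤ ∑' pq : ℕ × ℕ,
          Real.exp (-δ * ℓ i) * (Real.exp (-1:ℝ) ^ pq.1 * Real.exp (-1:ℝ) ^ pq.2) :=
          Summable.tsum_le_tsum hle (hfib i) (hgK.mul_left _)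
      _ = Real.exp (-δ * ℓ i) * K := by rw [tsum_mul_left]
  obtain ⟨hZm, hZne⟩ := aux_prod aZ hZ1 hZs
  exact ⟨hRm, hRne, hZm, hZne⟩
end

section
/- (Factorization of the Ruelle zeta function attached to ρ_m.) Let m ∈ ℕ, and suppose that for every i ∈ I the matrix A i ∈ Matrix (Fin (m+1)) (Fin (m+1)) ℂ is similar to the diagonal matrix whose diagonal entries are exp((m/2 − l)·(ℓ i + i·θ i)) for l = 0, 1, …, m (this is ρ_m(γ_i) for the m-th symmetric power ρ_m of the standard representation of SL(2,ℂ)). Then for every s ∈ ℂ with Re(s) > 2 + m/2, the family over i ∈ I given by det(1 − exp(−s·ℓ i)·(A i)) is multipliable, and ∏_{i ∈ I} det(1 − exp(−s·ℓ i)·(A i)) = ∏_{l=0}^{m} R(m − 2l, s − m/2 + l). -/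
/-- Multipliability of the Euler-type factors `1 - e^{i r θ_i} e^{-w ℓ_i}`. -/
lemma aux_mult {I : Type*} (ℓ θ : I → ℝ) (hℓ : ∀ i, 0 < ℓ i) (δ : ℝ)
    (hsum : Summable fun i => Real.exp (-δ * ℓ i)) (r : ℝ)
    (w : ℂ) (hw : δ < w.re) (hw0 : 0 < w.re) :
    Multipliable fun i : I => (1 - Complex.exp (Complex.I * (r : ℂ) * (θ i : ℂ))
      * Complex.exp (-w * (ℓ i : ℂ))) := by
  set z : I → ℂ := fun i => Complex.exp (Complex.I * (r : ℂ) * (θ i : ℂ))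
      * Complex.exp (-w * (ℓ i : ℂ)) with hz_def
  have hz : ∀ i, ‖z i‖ = Real.exp (-w.re * ℓ i) := by
    intro i
    rw [hz_def]
    simp only [norm_mul, Complex.norm_exp]
    have h1 : (Complex.I * (r : ℂ) * (θ i : ℂ)).re = 0 := by
      simp [Complex.mul_re, Complex.mul_im]
    have h2 : (-w * (ℓ i : ℂ)).re = -w.re * ℓ i := by
      simp [Complex.mul_re]
    rw [h1, h2, Real.exp_zero, one_mul]
  have hle : ∀ i, ‖z i‖ ≤ Real.exp (-δ * ℓ i) := by
    intro i
    rw [hz i]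
    apply Real.exp_le_exp.2
    nlinarith [hℓ i, hw.le]
  have hlt1 : ∀ i, ‖z i‖ < 1 := by
    intro i
    rw [hz i, ← Real.exp_zero]
    apply Real.exp_lt_exp.2
    nlinarith [hℓ i]
  have hne : ∀ i, (1 : ℂ) - z i ≠ 0 := by
    intro i h
    have h1 : z i = 1 := by linear_combination -h
    have h2 := hlt1 i
    rw [h1] at h2
    simp at h2
  have hlog : Summable fun i => Complex.log (1 - z i) := by
    have h0 : Filter.Tendsto (fun i => Real.exp (-δ * ℓ i)) Filter.cofinite (nhds 0) :=
      hsum.tendsto_cofinite_zero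
    have hev : ∀ᶠ i in Filter.cofinite,
        ‖Complex.log (1 - z i)‖ ≤ 3/2 * Real.exp (-δ * ℓ i) := by
      filter_upwards [h0.eventually_lt_const (by norm_num : (0:ℝ) < 1/2)] with i hi
      have hz2 : ‖-z i‖ ≤ 1/2 := by
        rw [norm_neg]; exact le_trans (hle i) hi.le
      have := Complex.norm_log_one_add_half_le_self hz2
      rw [← sub_eq_add_neg] at this
      refine le_trans this ?_
      rw [norm_neg]
      have := hle i
      nlinarith [norm_nonneg (z i)]
    exact Summable.of_norm_bounded_eventually (hsum.mul_left (3/2)) hev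
  exact Complex.multipliable_of_summable_log (f := fun i => 1 - z i) hlog

/-- Determinant of `1 - c • A` for `A` conjugate to a diagonal matrix. -/
lemma det_one_sub_smul {n : ℕ} (A P : Matrix (Fin n) (Fin n) ℂ) (hP : IsUnit P.det)
    (d : Fin n → ℂ) (hA : A = P * Matrix.diagonal d * P⁻¹) (c : ℂ) :
    (1 - c • A).det = ∏ l : Fin n, (1 - c * d l) := by
  have hPu : IsUnit P := (Matrix.isUnit_iff_isUnit_det P).2 hP
  have h1 : (1 : Matrix (Fin n) (Fin n) ℂ) - c • A
      = P * ((1 : Matrix (Fin n) (Fin n) ℂ) - c • Matrix.diagonal d) * P⁻¹ := by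
    subst hA
    rw [Matrix.mul_sub, Matrix.sub_mul, Matrix.mul_one, Matrix.mul_nonsing_inv _ hP,
      Matrix.mul_smul, Matrix.smul_mul]
  have h2 : (1 : Matrix (Fin n) (Fin n) ℂ) - c • Matrix.diagonal d
      = Matrix.diagonal (fun l => 1 - c * d l) := by
    ext a b
    by_cases h : a = b <;>
      simp [Matrix.one_apply, Matrix.diagonal_apply, Matrix.sub_apply, h]
  rw [h1, Matrix.det_conj hPu, h2, Matrix.det_diagonal]

/-- factorization of the Ruelle zeta function attached to `ρ_m`. -/
theorem statement2 {I : Type*} [Countable I] (ℓ θ : I → ℝ)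
    (hℓ : ∀ i, 0 < ℓ i) (δ : ℝ) (hδ : δ < 2)
    (hsum : Summable fun i => Real.exp (-δ * ℓ i))
    (m : ℕ) (A : I → Matrix (Fin (m + 1)) (Fin (m + 1)) ℂ)
    (hA : ∀ i : I, ∃ P : Matrix (Fin (m + 1)) (Fin (m + 1)) ℂ, IsUnit P.det ∧
      A i = P * Matrix.diagonal (fun l : Fin (m + 1) =>
        Complex.exp (((m : ℂ) / 2 - ((l : ℕ) : ℂ)) * ((ℓ i : ℂ) + Complex.I * (θ i : ℂ)))) * P⁻¹)
    (s : ℂ) (hs : 2 + (m : ℝ) / 2 < s.re) :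
    (Multipliable fun i : I =>
      Matrix.det (1 - Complex.exp (-s * (ℓ i : ℂ)) • A i)) ∧
    (∏' i : I, Matrix.det (1 - Complex.exp (-s * (ℓ i : ℂ)) • A i)) =
      ∏ l ∈ Finset.range (m + 1),
        Rz ℓ θ ((m : ℤ) - 2 * (l : ℤ)) (s - (m : ℂ) / 2 + (l : ℂ)) := by
  -- The Euler factor for the `l`-th diagonal entry.
  set F : ℕ → I → ℂ := fun l i =>
    1 - Complex.exp (Complex.I * ((((m : ℤ) - 2 * (l : ℤ) : ℤ) : ℂ) / 2) * (θ i : ℂ))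
      * Complex.exp (-(s - (m : ℂ) / 2 + (l : ℂ)) * (ℓ i : ℂ)) with hF_def
  -- real part of the shifted variable
  have hre : ∀ l : ℕ, (s - (m : ℂ) / 2 + (l : ℂ)).re = s.re - m / 2 + l := by
    intro l
    have : s - (m : ℂ) / 2 + (l : ℂ) = s - (((m : ℝ) / 2 : ℝ) : ℂ) + (((l : ℕ) : ℝ) : ℂ) := by
      push_cast; ring
    rw [this]
    simp
  have hFmult : ∀ l : ℕ, Multipliable (F l) := by
    intro l
    have hw : δ < (s - (m : ℂ) / 2 + (l : ℂ)).re := by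
      rw [hre l]
      have : (0:ℝ) ≤ l := Nat.cast_nonneg l
      linarith
    have hw0 : 0 < (s - (m : ℂ) / 2 + (l : ℂ)).re := by
      rw [hre l]
      have : (0:ℝ) ≤ l := Nat.cast_nonneg l
      linarith
    refine (aux_mult ℓ θ hℓ δ hsum (((m : ℝ) - 2 * l) / 2)
      (s - (m : ℂ) / 2 + (l : ℂ)) hw hw0).congr ?_
    intro i
    rw [hF_def]
    congr 3
    push_cast
    ring
  -- the determinant identity
  have hdet : ∀ i, (1 - Complex.exp (-s * (ℓ i : ℂ)) • A i).det
      = ∏ l ∈ Finset.range (m + 1), F l i := by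
    intro i
    obtain ⟨P, hP, hAi⟩ := hA i
    rw [det_one_sub_smul (A i) P hP _ hAi (Complex.exp (-s * (ℓ i : ℂ)))]
    rw [Fin.prod_univ_eq_prod_range (fun l : ℕ =>
      1 - Complex.exp (-s * (ℓ i : ℂ)) *
        Complex.exp (((m : ℂ) / 2 - (l : ℂ)) * ((ℓ i : ℂ) + Complex.I * (θ i : ℂ)))) (m + 1)]
    refine Finset.prod_congr rfl fun l _ => ?_
    rw [hF_def]
    congr 1
    rw [← Complex.exp_add, ← Complex.exp_add]
    congr 1
    push_cast
    ring
  have hm : Multipliable fun i : I => (1 - Complex.exp (-s * (ℓ i : ℂ)) • A i).det :=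
    (multipliable_prod (s := Finset.range (m + 1)) (fun l _ => hFmult l)).congr
      fun i => (hdet i).symm
  refine ⟨hm, ?_⟩
  calc (∏' i : I, (1 - Complex.exp (-s * (ℓ i : ℂ)) • A i).det)
      = ∏' i : I, ∏ l ∈ Finset.range (m + 1), F l i := tprod_congr hdet
    _ = ∏ l ∈ Finset.range (m + 1), ∏' i : I, F l i :=
        Multipliable.tprod_finsetProd fun l _ => hFmult l
    _ = ∏ l ∈ Finset.range (m + 1),
        Rz ℓ θ ((m : ℤ) - 2 * (l : ℤ)) (s - (m : ℂ) / 2 + (l : ℂ)) := rfl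
end

section
/- Let m ∈ ℕ and s ∈ ℂ with Re(s) > 2 + m/2. Then the family over (i, p) ∈ I × ℕ given by (1 − exp((m/2)·(ℓ i + i·θ i))·exp(−p(ℓ i + i·θ i))·exp(−s·ℓ i)) is multipliable, and Z(m, s − m/2) / Z(m + 2, s − m/2 + 1) = ∏_{i ∈ I} ∏_{p ≥ 0} (1 − exp((m/2)·(ℓ i + i·θ i))·exp(−p(ℓ i + i·θ i))·exp(−s·ℓ i)), where the denominator Z(m + 2, s − m/2 + 1) is nonzero. -/
open Complex Filter

section aux
variable {I : Type*}

/-- Combined exponent of the `Z(m, s - m/2)` factor at `(i, p, q)`. -/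
noncomputable def cE (ℓ θ : I → ℝ) (m : ℕ) (s : ℂ) (x : I × ℕ × ℕ) : ℂ :=
  Complex.I * (((m : ℝ) / 2 : ℝ) : ℂ) * (θ x.1 : ℂ)
    - ((x.2.1 : ℝ) : ℂ) * ((ℓ x.1 : ℂ) + Complex.I * (θ x.1 : ℂ))
    - ((x.2.2 : ℝ) : ℂ) * ((ℓ x.1 : ℂ) - Complex.I * (θ x.1 : ℂ))
    - (s - (((m : ℝ) / 2 : ℝ) : ℂ)) * (ℓ x.1 : ℂ)

lemma cE_re (ℓ θ : I → ℝ) (m : ℕ) (s : ℂ) (x : I × ℕ × ℕ) :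
    (cE ℓ θ m s x).re = -(((x.2.1 : ℝ) + x.2.2 + (s.re - (m : ℝ) / 2)) * ℓ x.1) := by
  simp [cE, Complex.sub_re, Complex.add_re, Complex.mul_re, Complex.mul_im,
    Complex.I_re, Complex.I_im, Complex.ofReal_re, Complex.ofReal_im]
  ring

lemma norm_exp_cE (ℓ θ : I → ℝ) (m : ℕ) (s : ℂ) (x : I × ℕ × ℕ) :
    ‖Complex.exp (cE ℓ θ m s x)‖
      = Real.exp (-(((x.2.1 : ℝ) + x.2.2 + (s.re - (m : ℝ) / 2)) * ℓ x.1)) := by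
  rw [Complex.norm_exp, cE_re]

lemma sumExp (ℓ : I → ℝ) (hℓ : ∀ i, 0 < ℓ i) {δ : ℝ} (hδ : δ < 2)
    (hsum : Summable fun i => Real.exp (-δ * ℓ i)) {r : ℝ} (hr : 2 < r) :
    Summable fun x : I × ℕ × ℕ => Real.exp (-(((x.2.1 : ℝ) + x.2.2 + r) * ℓ x.1)) := by
  have hlt : ∀ i, Real.exp (-ℓ i) < 1 := fun i => by
    rw [Real.exp_lt_one_iff]; linarith [hℓ i]
  have key : ∀ (i : I) (p q : ℕ), Real.exp (-(((p : ℝ) + q + r) * ℓ i)) =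
      Real.exp (-ℓ i) ^ p * (Real.exp (-ℓ i) ^ q * Real.exp (-(r * ℓ i))) := by
    intro i p q
    rw [← Real.exp_nat_mul, ← Real.exp_nat_mul, ← Real.exp_add, ← Real.exp_add]
    ring_nf
  have hfib : ∀ i, Summable (fun pq : ℕ × ℕ =>
      Real.exp (-(((pq.1 : ℝ) + pq.2 + r) * ℓ i))) := by
    intro i
    have hgeo := summable_geometric_of_lt_one (Real.exp_nonneg (-ℓ i)) (hlt i)
    have := hgeo.mul_of_nonneg (hgeo.mul_right (Real.exp (-(r * ℓ i))))
      (fun p => pow_nonneg (Real.exp_nonneg _) _)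
      (fun q => mul_nonneg (pow_nonneg (Real.exp_nonneg _) _) (Real.exp_nonneg _))
    exact this.congr fun pq => (key i pq.1 pq.2).symm
  refine (summable_prod_of_nonneg (fun x => Real.exp_nonneg _)).2 ⟨hfib, ?_⟩
  have tval : ∀ i, ∑' pq : ℕ × ℕ, Real.exp (-(((pq.1 : ℝ) + pq.2 + r) * ℓ i))
      = (1 - Real.exp (-ℓ i))⁻¹ * ((1 - Real.exp (-ℓ i))⁻¹ * Real.exp (-(r * ℓ i))) := by
    intro i
    have h1 : ∑' p : ℕ, Real.exp (-ℓ i) ^ p = (1 - Real.exp (-ℓ i))⁻¹ :=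
      tsum_geometric_of_lt_one (Real.exp_nonneg _) (hlt i)
    rw [(hfib i).tsum_prod]
    calc ∑' (p : ℕ) (q : ℕ), Real.exp (-(((p : ℝ) + q + r) * ℓ i))
        = ∑' (p : ℕ) (q : ℕ), Real.exp (-ℓ i) ^ p * (Real.exp (-ℓ i) ^ q * Real.exp (-(r * ℓ i))) := by
          exact tsum_congr fun p => tsum_congr fun q => key i p q
      _ = ∑' p : ℕ, Real.exp (-ℓ i) ^ p * ∑' q : ℕ, (Real.exp (-ℓ i) ^ q * Real.exp (-(r * ℓ i))) := by
          exact tsum_congr fun p => tsum_mul_left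
      _ = (∑' p : ℕ, Real.exp (-ℓ i) ^ p) * ∑' q : ℕ, (Real.exp (-ℓ i) ^ q * Real.exp (-(r * ℓ i))) :=
          tsum_mul_right
      _ = (1 - Real.exp (-ℓ i))⁻¹ * ((1 - Real.exp (-ℓ i))⁻¹ * Real.exp (-(r * ℓ i))) := by
          rw [tsum_mul_right, h1]
  set C : ℝ := (1 - Real.exp (-1))⁻¹ with hC
  have hCpos : 0 < C := by
    rw [hC]
    apply inv_pos.2
    have : Real.exp (-1) < 1 := by rw [Real.exp_lt_one_iff]; norm_num
    linarith
  apply Summable.of_norm_bounded_eventually (g := fun i => C * (C * Real.exp (-δ * ℓ i)))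
    ((hsum.mul_left C).mul_left C)
  have hev : ∀ᶠ i in cofinite, Real.exp (-δ * ℓ i) < min 1 (Real.exp (-δ)) :=
    hsum.tendsto_cofinite_zero.eventually_lt_const
      (lt_min one_pos (Real.exp_pos _))
  filter_upwards [hev] with i hi
  have h1i : Real.exp (-δ * ℓ i) < 1 := hi.trans_le (min_le_left _ _)
  have hδpos : 0 < δ := by
    by_contra h
    push_neg at h
    have : (1 : ℝ) ≤ Real.exp (-δ * ℓ i) :=
      Real.one_le_exp (mul_nonneg (neg_nonneg.2 h) (hℓ i).le)
    linarith
  have hℓ1 : 1 < ℓ i := by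
    have h2i : Real.exp (-δ * ℓ i) < Real.exp (-δ) := hi.trans_le (min_le_right _ _)
    have := Real.exp_lt_exp.1 h2i
    nlinarith
  have hxpos : 0 < 1 - Real.exp (-ℓ i) := by linarith [hlt i]
  rw [tval i, Real.norm_eq_abs, abs_of_pos
    (mul_pos (inv_pos.2 hxpos) (mul_pos (inv_pos.2 hxpos) (Real.exp_pos _)))]
  have e1 : (1 - Real.exp (-ℓ i))⁻¹ ≤ C := by
    rw [hC]
    have hden : (0:ℝ) < 1 - Real.exp (-1) := by
      have : Real.exp (-1) < 1 := by rw [Real.exp_lt_one_iff]; norm_num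
      linarith
    apply inv_anti₀ hden
    have : Real.exp (-ℓ i) ≤ Real.exp (-1) := Real.exp_le_exp.2 (by linarith)
    linarith
  have e2 : Real.exp (-(r * ℓ i)) ≤ Real.exp (-δ * ℓ i) := by
    apply Real.exp_le_exp.2
    nlinarith
  have h0 : (0:ℝ) ≤ (1 - Real.exp (-ℓ i))⁻¹ := (inv_pos.2 hxpos).le
  calc (1 - Real.exp (-ℓ i))⁻¹ * ((1 - Real.exp (-ℓ i))⁻¹ * Real.exp (-(r * ℓ i)))
      ≤ C * ((1 - Real.exp (-ℓ i))⁻¹ * Real.exp (-(r * ℓ i))) := by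
        apply mul_le_mul_of_nonneg_right e1 (by positivity)
    _ ≤ C * (C * Real.exp (-δ * ℓ i)) := by
        apply mul_le_mul_of_nonneg_left _ hCpos.le
        exact mul_le_mul e1 e2 (Real.exp_pos _).le hCpos.le

lemma logSummable {ι : Type*} {g : ι → ℂ} (hs : Summable fun x => ‖g x‖) :
    Summable fun x => Complex.log (1 - g x) := by
  have hev : ∀ᶠ x in cofinite, ‖g x‖ < 1 / 2 :=
    hs.tendsto_cofinite_zero.eventually_lt_const (by norm_num)
  apply Summable.of_norm_bounded_eventually (g := fun x => 3 / 2 * ‖g x‖) (hs.mul_left _)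
  filter_upwards [hev] with x hx
  have h := Complex.norm_log_one_add_half_le_self (z := -g x) (by rw [norm_neg]; linarith)
  rw [norm_neg] at h
  simpa [sub_eq_add_neg] using h

lemma prodStuff {ι : Type*} {g : ι → ℂ} (hs : Summable fun x => ‖g x‖)
    (hlt : ∀ x, ‖g x‖ < 1) :
    Multipliable (fun x => 1 - g x) ∧
      (∏' x, (1 - g x)) = Complex.exp (∑' x, Complex.log (1 - g x)) := by
  have hne : ∀ x, 1 - g x ≠ 0 := by
    intro x h
    have hg : g x = 1 := by linear_combination -h
    have := hlt x
    rw [hg] at this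
    simp at this
  have hlog : Summable fun x => Complex.log (1 - g x) := logSummable hs
  constructor
  · exact Complex.multipliable_of_summable_log hlog
  · exact (Complex.cexp_tsum_eq_tprod hne hlog).symm

end aux

set_option maxHeartbeats 1000000 in
/-- `Z(m, s − m/2) / Z(m+2, s − m/2 + 1)` as a convergent product over
`(i, p) ∈ I × ℕ`. -/
theorem statement3 {I : Type*} [Countable I] (ℓ θ : I → ℝ)
    (hℓ : ∀ i, 0 < ℓ i) (δ : ℝ) (hδ : δ < 2)
    (hsum : Summable fun i => Real.exp (-δ * ℓ i))
    (m : ℕ) (s : ℂ) (hs : 2 + (m : ℝ) / 2 < s.re) :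
    (Multipliable fun x : I × ℕ =>
      (1 - Complex.exp ((m : ℂ) / 2 * ((ℓ x.1 : ℂ) + Complex.I * (θ x.1 : ℂ)))
         * Complex.exp (-(x.2 : ℂ) * ((ℓ x.1 : ℂ) + Complex.I * (θ x.1 : ℂ)))
         * Complex.exp (-s * (ℓ x.1 : ℂ)))) ∧
    Zs ℓ θ ((m : ℤ) + 2) (s - (m : ℂ) / 2 + 1) ≠ 0 ∧
    Zs ℓ θ (m : ℤ) (s - (m : ℂ) / 2) / Zs ℓ θ ((m : ℤ) + 2) (s - (m : ℂ) / 2 + 1) =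
      ∏' x : I × ℕ,
        (1 - Complex.exp ((m : ℂ) / 2 * ((ℓ x.1 : ℂ) + Complex.I * (θ x.1 : ℂ)))
           * Complex.exp (-(x.2 : ℂ) * ((ℓ x.1 : ℂ) + Complex.I * (θ x.1 : ℂ)))
           * Complex.exp (-s * (ℓ x.1 : ℂ))) := by
  have hr : 2 < s.re - (m : ℝ) / 2 := by linarith
  have fac1 : ∀ x : I × ℕ × ℕ,
      (1 - Complex.exp (Complex.I * ((((m : ℤ) : ℂ)) / 2) * (θ x.1 : ℂ))
        * Complex.exp (-(x.2.1 : ℂ) * ((ℓ x.1 : ℂ) + Complex.I * (θ x.1 : ℂ)))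
        * Complex.exp (-(x.2.2 : ℂ) * ((ℓ x.1 : ℂ) - Complex.I * (θ x.1 : ℂ)))
        * Complex.exp (-(s - (m : ℂ) / 2) * (ℓ x.1 : ℂ)))
      = 1 - Complex.exp (cE ℓ θ m s x) := by
    intro x
    rw [← Complex.exp_add, ← Complex.exp_add, ← Complex.exp_add]
    congr 2
    unfold cE
    push_cast
    ring
  have fac2 : ∀ x : I × ℕ × ℕ,
      (1 - Complex.exp (Complex.I * ((((m : ℤ) + 2 : ℤ) : ℂ) / 2) * (θ x.1 : ℂ))
        * Complex.exp (-(x.2.1 : ℂ) * ((ℓ x.1 : ℂ) + Complex.I * (θ x.1 : ℂ)))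
        * Complex.exp (-(x.2.2 : ℂ) * ((ℓ x.1 : ℂ) - Complex.I * (θ x.1 : ℂ)))
        * Complex.exp (-(s - (m : ℂ) / 2 + 1) * (ℓ x.1 : ℂ)))
      = 1 - Complex.exp (cE ℓ θ m s (x.1, x.2.1, x.2.2 + 1)) := by
    intro x
    rw [← Complex.exp_add, ← Complex.exp_add, ← Complex.exp_add]
    congr 2
    unfold cE
    push_cast
    ring
  have fac0 : ∀ y : I × ℕ,
      (1 - Complex.exp ((m : ℂ) / 2 * ((ℓ y.1 : ℂ) + Complex.I * (θ y.1 : ℂ)))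
         * Complex.exp (-(y.2 : ℂ) * ((ℓ y.1 : ℂ) + Complex.I * (θ y.1 : ℂ)))
         * Complex.exp (-s * (ℓ y.1 : ℂ)))
      = 1 - Complex.exp (cE ℓ θ m s (y.1, y.2, 0)) := by
    intro y
    rw [← Complex.exp_add, ← Complex.exp_add]
    congr 2
    unfold cE
    push_cast
    ring
  have hS : Summable fun x : I × ℕ × ℕ => ‖Complex.exp (cE ℓ θ m s x)‖ :=
    (sumExp ℓ hℓ hδ hsum hr).congr fun x => (norm_exp_cE ℓ θ m s x).symm
  have hlt : ∀ x : I × ℕ × ℕ, ‖Complex.exp (cE ℓ θ m s x)‖ < 1 := by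
    intro x
    rw [norm_exp_cE, Real.exp_lt_one_iff, neg_lt_zero]
    have h0 : (0:ℝ) ≤ (x.2.1 : ℝ) + x.2.2 := by positivity
    exact mul_pos (by linarith) (hℓ _)
  have inj2 : Function.Injective
      (fun x : I × ℕ × ℕ => (x.1, x.2.1, x.2.2 + 1) : I × ℕ × ℕ → I × ℕ × ℕ) := by
    rintro ⟨a1, a2, a3⟩ ⟨b1, b2, b3⟩ h
    simp only [Prod.mk.injEq] at h
    obtain ⟨h1, h2, h3⟩ := h
    simp only [Prod.mk.injEq]
    exact ⟨h1, h2, Nat.succ_injective h3⟩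
  have inj0 : Function.Injective
      (fun y : I × ℕ => (y.1, y.2, 0) : I × ℕ → I × ℕ × ℕ) := by
    rintro ⟨a1, a2⟩ ⟨b1, b2⟩ h
    simp only [Prod.mk.injEq] at h
    simp only [Prod.mk.injEq]
    exact ⟨h.1, h.2.1⟩
  have hS2 : Summable fun x : I × ℕ × ℕ =>
      ‖Complex.exp (cE ℓ θ m s (x.1, x.2.1, x.2.2 + 1))‖ := hS.comp_injective inj2
  have hS0 : Summable fun y : I × ℕ =>
      ‖Complex.exp (cE ℓ θ m s (y.1, y.2, 0))‖ := hS.comp_injective inj0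
  obtain ⟨M1, P1⟩ := prodStuff hS hlt
  obtain ⟨M2, P2⟩ := prodStuff hS2 (fun x => hlt _)
  obtain ⟨M0, P0⟩ := prodStuff hS0 (fun y => hlt _)
  have hZ1 : Zs ℓ θ (m : ℤ) (s - (m : ℂ) / 2)
      = ∏' x : I × ℕ × ℕ, (1 - Complex.exp (cE ℓ θ m s x)) := by
    unfold Zs; exact tprod_congr fac1
  have hZ2 : Zs ℓ θ ((m : ℤ) + 2) (s - (m : ℂ) / 2 + 1)
      = ∏' x : I × ℕ × ℕ, (1 - Complex.exp (cE ℓ θ m s (x.1, x.2.1, x.2.2 + 1))) := by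
    unfold Zs; exact tprod_congr fac2
  have hR : (∏' y : I × ℕ,
      (1 - Complex.exp ((m : ℂ) / 2 * ((ℓ y.1 : ℂ) + Complex.I * (θ y.1 : ℂ)))
         * Complex.exp (-(y.2 : ℂ) * ((ℓ y.1 : ℂ) + Complex.I * (θ y.1 : ℂ)))
         * Complex.exp (-s * (ℓ y.1 : ℂ))))
      = ∏' y : I × ℕ, (1 - Complex.exp (cE ℓ θ m s (y.1, y.2, 0))) := tprod_congr fac0
  -- summability of logs
  have hL : Summable fun x : I × ℕ × ℕ =>
      Complex.log (1 - Complex.exp (cE ℓ θ m s x)) := logSummable hS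
  have hu : Summable (fun z : (I × ℕ) × ℕ =>
      Complex.log (1 - Complex.exp (cE ℓ θ m s (z.1.1, z.1.2, z.2)))) :=
    (Equiv.prodAssoc I ℕ ℕ).summable_iff.2 hL
  have hu2 : Summable (fun z : (I × ℕ) × ℕ =>
      Complex.log (1 - Complex.exp (cE ℓ θ m s (z.1.1, z.1.2, z.2 + 1)))) := by
    apply hu.comp_injective (i := fun z : (I × ℕ) × ℕ => (z.1, z.2 + 1))
    rintro ⟨a, b⟩ ⟨c, d⟩ h
    simp only [Prod.mk.injEq] at h
    simp only [Prod.mk.injEq]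
    exact ⟨h.1, Nat.succ_injective h.2⟩
  have hA : Summable (fun y : I × ℕ =>
      Complex.log (1 - Complex.exp (cE ℓ θ m s (y.1, y.2, 0)))) := hL.comp_injective inj0
  have hB : Summable (fun y : I × ℕ =>
      ∑' q : ℕ, Complex.log (1 - Complex.exp (cE ℓ θ m s (y.1, y.2, q + 1)))) := hu2.prod
  have key : ∑' x : I × ℕ × ℕ, Complex.log (1 - Complex.exp (cE ℓ θ m s x))
      = (∑' y : I × ℕ, Complex.log (1 - Complex.exp (cE ℓ θ m s (y.1, y.2, 0))))
        + ∑' x : I × ℕ × ℕ, Complex.log (1 - Complex.exp (cE ℓ θ m s (x.1, x.2.1, x.2.2 + 1))) :=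
    calc ∑' x : I × ℕ × ℕ, Complex.log (1 - Complex.exp (cE ℓ θ m s x))
        = ∑' z : (I × ℕ) × ℕ,
            Complex.log (1 - Complex.exp (cE ℓ θ m s (z.1.1, z.1.2, z.2))) :=
          ((Equiv.prodAssoc I ℕ ℕ).tsum_eq (fun x : I × ℕ × ℕ =>
            Complex.log (1 - Complex.exp (cE ℓ θ m s x)))).symm
      _ = ∑' y : I × ℕ, ∑' q : ℕ,
            Complex.log (1 - Complex.exp (cE ℓ θ m s (y.1, y.2, q))) := hu.tsum_prod
      _ = ∑' y : I × ℕ, (Complex.log (1 - Complex.exp (cE ℓ θ m s (y.1, y.2, 0)))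
            + ∑' q : ℕ, Complex.log (1 - Complex.exp (cE ℓ θ m s (y.1, y.2, q + 1)))) :=
          tsum_congr fun y => (hu.prod_factor y).tsum_eq_zero_add
      _ = (∑' y : I × ℕ, Complex.log (1 - Complex.exp (cE ℓ θ m s (y.1, y.2, 0))))
            + ∑' y : I × ℕ, ∑' q : ℕ,
                Complex.log (1 - Complex.exp (cE ℓ θ m s (y.1, y.2, q + 1))) :=
          hA.tsum_add hB
      _ = (∑' y : I × ℕ, Complex.log (1 - Complex.exp (cE ℓ θ m s (y.1, y.2, 0))))
            + ∑' z : (I × ℕ) × ℕ,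
                Complex.log (1 - Complex.exp (cE ℓ θ m s (z.1.1, z.1.2, z.2 + 1))) :=
          congrArg _ (hu2.tsum_prod).symm
      _ = (∑' y : I × ℕ, Complex.log (1 - Complex.exp (cE ℓ θ m s (y.1, y.2, 0))))
            + ∑' x : I × ℕ × ℕ,
                Complex.log (1 - Complex.exp (cE ℓ θ m s (x.1, x.2.1, x.2.2 + 1))) :=
          congrArg _ ((Equiv.prodAssoc I ℕ ℕ).tsum_eq (fun x : I × ℕ × ℕ =>
            Complex.log (1 - Complex.exp (cE ℓ θ m s (x.1, x.2.1, x.2.2 + 1)))))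
  refine ⟨M0.congr (fun y => (fac0 y).symm), ?_, ?_⟩
  · rw [hZ2, P2]
    exact Complex.exp_ne_zero _
  · rw [hZ1, hZ2, P1, P2, ← Complex.exp_sub, hR, P0]
    congr 1
    rw [key]
    ring
end

section
/- Let m ∈ ℕ and s ∈ ℂ with Re(s) > 2. Then every factor (1 − exp(−(m/2)·(ℓ i + i·θ i))·exp(−p(ℓ i + i·θ i))·exp(−s·ℓ i)) with i ∈ I and p ≥ 1 is nonzero, the family over (i, p) ∈ I × {p ∈ ℕ : p ≥ 1} of the reciprocals (1 − exp(−(m/2)·(ℓ i + i·θ i))·exp(−p(ℓ i + i·θ i))·exp(−s·ℓ i))⁻¹ is multipliable, and Z(−m, s + m/2 + 2) / Z(−(m + 2), s + m/2 + 1) = ∏_{i ∈ I} ∏_{p ≥ 1} (1 − exp(−(m/2)·(ℓ i + i·θ i))·exp(−p(ℓ i + i·θ i))·exp(−s·ℓ i))⁻¹, where the denominator Z(−(m + 2), s + m/2 + 1) is nonzero. -/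
open Complex Filter


noncomputable def Aterm {I : Type*} (ℓ θ : I → ℝ) (m : ℕ) (s : ℂ) (x : I × ℕ × ℕ) : ℂ :=
  Complex.exp (-((m : ℂ) / 2) * ((ℓ x.1 : ℂ) + Complex.I * (θ x.1 : ℂ))) *
  Complex.exp (-(x.2.1 : ℂ) * ((ℓ x.1 : ℂ) + Complex.I * (θ x.1 : ℂ))) *
  Complex.exp (-(x.2.2 : ℂ) * ((ℓ x.1 : ℂ) - Complex.I * (θ x.1 : ℂ))) *
  Complex.exp (-s * (ℓ x.1 : ℂ))

noncomputable def Gterm {I : Type*} (ℓ : I → ℝ) (x : I × ℕ × ℕ) : ℝ :=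
  Real.exp (-(x.2.1 : ℝ) * ℓ x.1) * Real.exp (-(x.2.2 : ℝ) * ℓ x.1) * Real.exp (-2 * ℓ x.1)

lemma Aterm_norm_le {I : Type*} (ℓ θ : I → ℝ) (m : ℕ) (s : ℂ) (hs : 2 ≤ s.re)
    (x : I × ℕ × ℕ) (hl : 0 ≤ ℓ x.1) :
    ‖Aterm ℓ θ m s x‖ ≤ Gterm ℓ x := by
  unfold Aterm Gterm
  simp only [norm_mul, Complex.norm_exp]
  have h1 : (-((m : ℂ) / 2) * ((ℓ x.1 : ℂ) + Complex.I * (θ x.1 : ℂ))).re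
      = -((m : ℝ) / 2) * ℓ x.1 := by
    simp [Complex.mul_re, Complex.add_re, Complex.div_re]
  have h2 : (-((x.2.1 : ℕ) : ℂ) * ((ℓ x.1 : ℂ) + Complex.I * (θ x.1 : ℂ))).re
      = -(x.2.1 : ℝ) * ℓ x.1 := by
    simp [Complex.mul_re]
  have h3 : (-((x.2.2 : ℕ) : ℂ) * ((ℓ x.1 : ℂ) - Complex.I * (θ x.1 : ℂ))).re
      = -(x.2.2 : ℝ) * ℓ x.1 := by
    simp [Complex.mul_re]
  have h4 : (-s * ((ℓ x.1 : ℝ) : ℂ)).re = -s.re * ℓ x.1 := by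
    simp [Complex.mul_re]
  rw [h1, h2, h3, h4]
  have e1 : Real.exp (-((m : ℝ) / 2) * ℓ x.1) ≤ 1 := by
    rw [Real.exp_le_one_iff]
    nlinarith [Nat.cast_nonneg (α := ℝ) m]
  have e4 : Real.exp (-s.re * ℓ x.1) ≤ Real.exp (-2 * ℓ x.1) := by
    apply Real.exp_le_exp.2; nlinarith
  calc Real.exp (-((m : ℝ) / 2) * ℓ x.1) * Real.exp (-(x.2.1 : ℝ) * ℓ x.1) *
        Real.exp (-(x.2.2 : ℝ) * ℓ x.1) * Real.exp (-s.re * ℓ x.1)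
      ≤ 1 * Real.exp (-(x.2.1 : ℝ) * ℓ x.1) * Real.exp (-(x.2.2 : ℝ) * ℓ x.1) *
        Real.exp (-2 * ℓ x.1) := by
        gcongr
    _ = _ := by ring

lemma Gterm_le {I : Type*} (ℓ : I → ℝ) (x : I × ℕ × ℕ) (hl : 0 ≤ ℓ x.1) :
    Gterm ℓ x ≤ Real.exp (-2 * ℓ x.1) := by
  unfold Gterm
  have h1 : Real.exp (-(x.2.1 : ℝ) * ℓ x.1) ≤ 1 := by
    rw [Real.exp_le_one_iff]; nlinarith [Nat.cast_nonneg (α := ℝ) x.2.1]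
  have h2 : Real.exp (-(x.2.2 : ℝ) * ℓ x.1) ≤ 1 := by
    rw [Real.exp_le_one_iff]; nlinarith [Nat.cast_nonneg (α := ℝ) x.2.2]
  calc Real.exp (-(x.2.1 : ℝ) * ℓ x.1) * Real.exp (-(x.2.2 : ℝ) * ℓ x.1) *
        Real.exp (-2 * ℓ x.1)
      ≤ 1 * 1 * Real.exp (-2 * ℓ x.1) := by
        gcongr
    _ = _ := by ring

lemma Gterm_lt_one {I : Type*} (ℓ : I → ℝ) (x : I × ℕ × ℕ) (hl : 0 < ℓ x.1) :
    Gterm ℓ x < 1 :=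
  lt_of_le_of_lt (Gterm_le ℓ x hl.le) (by rw [Real.exp_lt_one_iff]; nlinarith)

-- finiteness of small-length set
lemma small_finite {I : Type*} (ℓ : I → ℝ) (hℓ : ∀ i, 0 < ℓ i) (δ : ℝ)
    (hsum : Summable fun i => Real.exp (-δ * ℓ i)) : {i : I | ℓ i < 1}.Finite := by
  have h0 := hsum.tendsto_cofinite_zero
  have hpos : (0 : ℝ) < min 1 (Real.exp (-δ)) := lt_min one_pos (Real.exp_pos _)
  have hev : ∀ᶠ i in cofinite, Real.exp (-δ * ℓ i) < min 1 (Real.exp (-δ)) :=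
    h0.eventually_lt_const hpos
  rw [Filter.eventually_cofinite] at hev
  apply hev.subset
  intro i hi
  simp only [Set.mem_setOf_eq, not_lt] at hi ⊢
  rcases le_or_gt δ 0 with h | h
  · exact le_trans (min_le_left _ _) (Real.one_le_exp (by nlinarith [(hℓ i).le]))
  · refine le_trans (min_le_right _ _) (Real.exp_le_exp.2 ?_)
    nlinarith [hℓ i]

lemma Gterm_summable {I : Type*} (ℓ : I → ℝ) (hℓ : ∀ i, 0 < ℓ i) (δ : ℝ) (hδ : δ < 2)
    (hsum : Summable fun i => Real.exp (-δ * ℓ i)) : Summable (Gterm ℓ) := by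
  have hnn : ∀ x : I × ℕ × ℕ, 0 ≤ Gterm ℓ x := fun x => by
    unfold Gterm; positivity
  rw [show (Gterm ℓ) = fun x : I × ℕ × ℕ => Gterm ℓ x from rfl]
  apply (summable_prod_of_nonneg (fun x => hnn x)).2
  constructor
  · intro i
    -- geometric in each slice
    have hr0 : (0:ℝ) ≤ Real.exp (-ℓ i) := (Real.exp_pos _).le
    have hr1 : Real.exp (-ℓ i) < 1 := by rw [Real.exp_lt_one_iff]; linarith [hℓ i]
    have hgeo := summable_geometric_of_lt_one hr0 hr1
    have := (hgeo.mul_of_nonneg hgeo (fun n => pow_nonneg hr0 n) (fun n => pow_nonneg hr0 n))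
    apply ((this.mul_right (Real.exp (-2 * ℓ i)))).congr
    intro y
    unfold Gterm
    simp only []
    rw [← Real.exp_nat_mul, ← Real.exp_nat_mul]
    ring_nf
  · -- the sums over slices
    have hval : ∀ i : I, (∑' y : ℕ × ℕ, Gterm ℓ (i, y))
        = (1 - Real.exp (-ℓ i))⁻¹ * (1 - Real.exp (-ℓ i))⁻¹ * Real.exp (-2 * ℓ i) := by
      intro i
      have hr0 : (0:ℝ) ≤ Real.exp (-ℓ i) := (Real.exp_pos _).le
      have hr1 : Real.exp (-ℓ i) < 1 := by rw [Real.exp_lt_one_iff]; linarith [hℓ i]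
      have hgeo := summable_geometric_of_lt_one hr0 hr1
      have hnorm : Summable fun n : ℕ => ‖Real.exp (-ℓ i) ^ n‖ := by
        simpa [_root_.abs_of_nonneg (pow_nonneg hr0 _)] using hgeo
      calc (∑' y : ℕ × ℕ, Gterm ℓ (i, y))
          = ∑' y : ℕ × ℕ, (Real.exp (-ℓ i) ^ y.1 * Real.exp (-ℓ i) ^ y.2) *
              Real.exp (-2 * ℓ i) := by
            apply tsum_congr; intro y
            unfold Gterm
            rw [← Real.exp_nat_mul, ← Real.exp_nat_mul]
            ring_nf
        _ = (∑' y : ℕ × ℕ, Real.exp (-ℓ i) ^ y.1 * Real.exp (-ℓ i) ^ y.2) *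
              Real.exp (-2 * ℓ i) := tsum_mul_right
        _ = ((∑' n : ℕ, Real.exp (-ℓ i) ^ n) * (∑' n : ℕ, Real.exp (-ℓ i) ^ n)) *
              Real.exp (-2 * ℓ i) := by
            rw [tsum_mul_tsum_of_summable_norm hnorm hnorm]
        _ = _ := by rw [tsum_geometric_of_lt_one hr0 hr1]
    -- compare with exp(-δ ℓ)
    apply summable_of_isBigO hsum
    apply Asymptotics.IsBigO.of_bound 4
    have hfin : {i : I | ℓ i < 1}.Finite := small_finite ℓ hℓ δ hsum
    have hev : ∀ᶠ i in cofinite, (1:ℝ) ≤ ℓ i := by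
      rw [Filter.eventually_cofinite]
      exact hfin.subset (by intro i hi; simpa using hi)
    filter_upwards [hev] with i hi
    rw [hval i]
    have hr1 : Real.exp (-ℓ i) ≤ 1/2 := by
      have : Real.exp (-ℓ i) ≤ Real.exp (-1) := Real.exp_le_exp.2 (by linarith)
      have h2 : Real.exp (-1 : ℝ) ≤ 1/2 := by
        rw [Real.exp_neg]
        rw [inv_le_comm₀ (Real.exp_pos 1) (by norm_num)]
        have := Real.add_one_le_exp (1:ℝ)
        linarith
      linarith
    have hr0 : (0:ℝ) < Real.exp (-ℓ i) := Real.exp_pos _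
    have hinv : (1 - Real.exp (-ℓ i))⁻¹ ≤ 2 := by
      rw [inv_le_comm₀ (by linarith) (by norm_num)]
      linarith
    have hinv0 : (0:ℝ) ≤ (1 - Real.exp (-ℓ i))⁻¹ := by
      apply inv_nonneg.2; linarith
    have hc : Real.exp (-2 * ℓ i) ≤ Real.exp (-δ * ℓ i) := by
      apply Real.exp_le_exp.2; nlinarith
    have hcpos := Real.exp_pos (-2 * ℓ i)
    rw [Real.norm_eq_abs, Real.norm_eq_abs, _root_.abs_of_nonneg (by positivity),
      _root_.abs_of_nonneg (Real.exp_pos _).le]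
    calc (1 - Real.exp (-ℓ i))⁻¹ * (1 - Real.exp (-ℓ i))⁻¹ * Real.exp (-2 * ℓ i)
        ≤ 2 * 2 * Real.exp (-2 * ℓ i) := by gcongr
      _ = 4 * Real.exp (-2 * ℓ i) := by ring
      _ ≤ 4 * Real.exp (-δ * ℓ i) := by linarith

lemma hasProd_log {ι : Type*} (f : ι → ℂ) (hfn : ∀ n, f n ≠ 0)
    (hf : Summable fun n => Complex.log (f n)) :
    HasProd f (Complex.exp (∑' n, Complex.log (f n))) := by
  have h := hf.hasSum.cexp
  have he : (Complex.exp ∘ fun n => Complex.log (f n)) = f :=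
    funext fun n => Complex.exp_log (hfn n)
  rwa [he] at h

lemma summable_log_one_sub {ι : Type*} (A : ι → ℂ) (hA : Summable fun x => ‖A x‖) :
    Summable fun x => Complex.log (1 - A x) := by
  apply summable_of_isBigO hA
  apply Asymptotics.IsBigO.of_bound (3/2)
  have hev : ∀ᶠ x in cofinite, ‖A x‖ < 1/2 :=
    hA.tendsto_cofinite_zero.eventually_lt_const (by norm_num)
  filter_upwards [hev] with x hx
  have h := Complex.norm_log_one_add_half_le_self (z := -A x) (by simpa using hx.le)
  rw [Real.norm_eq_abs, _root_.abs_of_nonneg (norm_nonneg _)]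
  simpa [sub_eq_add_neg] using h

lemma one_sub_ne_zero {z : ℂ} (h : ‖z‖ < 1) : 1 - z ≠ 0 := by
  intro hc
  have : (1 : ℂ) = z := by linear_combination hc
  rw [← this] at h; simp at h

lemma one_sub_arg_ne_pi {z : ℂ} (h : ‖z‖ < 1) : (1 - z).arg ≠ Real.pi := by
  rw [Ne, Complex.arg_eq_pi_iff]
  rintro ⟨h1, -⟩
  have hre : z.re ≤ ‖z‖ := le_trans (le_abs_self _) (Complex.abs_re_le_norm z)
  rw [Complex.sub_re, Complex.one_re] at h1
  linarith

def eSucc : ℕ ≃ {p : ℕ // 1 ≤ p} where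
  toFun p := ⟨p + 1, Nat.le_add_left 1 p⟩
  invFun q := q.1 - 1
  left_inv p := by simp
  right_inv q := by obtain ⟨v, h⟩ := q; ext; simp; omega

def eQzero {I : Type*} : (I × ℕ) ≃ {x : I × ℕ × ℕ | x.2.2 = 0} where
  toFun y := ⟨(y.1, y.2, 0), rfl⟩
  invFun x := (x.1.1, x.1.2.1)
  left_inv y := rfl
  right_inv x := by
    obtain ⟨⟨i, p, q⟩, hx⟩ := x
    simp only [Set.mem_setOf_eq] at hx
    subst hx; rfl

def eQpos {I : Type*} : (I × ℕ × ℕ) ≃ ↥({x : I × ℕ × ℕ | x.2.2 = 0}ᶜ) where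
  toFun x := ⟨(x.1, x.2.1, x.2.2 + 1), Nat.succ_ne_zero _⟩
  invFun x := (x.1.1, x.1.2.1, x.1.2.2 - 1)
  left_inv x := rfl
  right_inv x := by
    obtain ⟨⟨i, p, q⟩, hx⟩ := x
    simp only [Set.mem_compl_iff, Set.mem_setOf_eq] at hx
    cases q with
    | zero => exact absurd rfl hx
    | succ q => rfl

lemma factor1 {I : Type*} (ℓ θ : I → ℝ) (m : ℕ) (s : ℂ) (x : I × ℕ × ℕ) :
    1 - Complex.exp (Complex.I * (((-(m : ℤ) : ℤ) : ℂ) / 2) * (θ x.1 : ℂ))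
      * Complex.exp (-(x.2.1 : ℂ) * ((ℓ x.1 : ℂ) + Complex.I * (θ x.1 : ℂ)))
      * Complex.exp (-(x.2.2 : ℂ) * ((ℓ x.1 : ℂ) - Complex.I * (θ x.1 : ℂ)))
      * Complex.exp (-(s + (m : ℂ) / 2 + 2) * (ℓ x.1 : ℂ))
    = 1 - Aterm ℓ θ m s (x.1, x.2.1 + 1, x.2.2 + 1) := by
  unfold Aterm
  simp only [← Complex.exp_add]
  rw [sub_right_inj]
  apply congrArg Complex.exp
  push_cast
  ring

lemma factor2 {I : Type*} (ℓ θ : I → ℝ) (m : ℕ) (s : ℂ) (x : I × ℕ × ℕ) :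
    1 - Complex.exp (Complex.I * (((-((m : ℤ) + 2) : ℤ) : ℂ) / 2) * (θ x.1 : ℂ))
      * Complex.exp (-(x.2.1 : ℂ) * ((ℓ x.1 : ℂ) + Complex.I * (θ x.1 : ℂ)))
      * Complex.exp (-(x.2.2 : ℂ) * ((ℓ x.1 : ℂ) - Complex.I * (θ x.1 : ℂ)))
      * Complex.exp (-(s + (m : ℂ) / 2 + 1) * (ℓ x.1 : ℂ))
    = 1 - Aterm ℓ θ m s (x.1, x.2.1 + 1, x.2.2) := by
  unfold Aterm
  simp only [← Complex.exp_add]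
  rw [sub_right_inj]
  apply congrArg Complex.exp
  push_cast
  ring

lemma factor3 {I : Type*} (ℓ θ : I → ℝ) (m : ℕ) (s : ℂ) (i : I) (p : ℕ) :
    1 - Complex.exp (-((m : ℂ) / 2) * ((ℓ i : ℂ) + Complex.I * (θ i : ℂ)))
      * Complex.exp (-(p : ℂ) * ((ℓ i : ℂ) + Complex.I * (θ i : ℂ)))
      * Complex.exp (-s * (ℓ i : ℂ))
    = 1 - Aterm ℓ θ m s (i, p, 0) := by
  unfold Aterm
  norm_num


lemma Aterm_norm_lt_one {I : Type*} (ℓ θ : I → ℝ) (m : ℕ) (s : ℂ) (hs : 2 ≤ s.re)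
    (hℓ : ∀ i, 0 < ℓ i) (x : I × ℕ × ℕ) : ‖Aterm ℓ θ m s x‖ < 1 :=
  lt_of_le_of_lt (Aterm_norm_le ℓ θ m s hs x (hℓ _).le) (Gterm_lt_one ℓ x (hℓ _))

lemma Aterm_norm_summable {I : Type*} (ℓ θ : I → ℝ) (hℓ : ∀ i, 0 < ℓ i) (δ : ℝ) (hδ : δ < 2)
    (hsum : Summable fun i => Real.exp (-δ * ℓ i)) (m : ℕ) (s : ℂ) (hs : 2 ≤ s.re) :
    Summable (fun x : I × ℕ × ℕ => ‖Aterm ℓ θ m s x‖) :=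
  (Gterm_summable ℓ hℓ δ hδ hsum).of_nonneg_of_le (fun x => norm_nonneg _)
    (fun x => Aterm_norm_le ℓ θ m s hs x (hℓ _).le)

/-- `Z(−m, s + m/2 + 2) / Z(−(m+2), s + m/2 + 1)` as a product of reciprocals
over `(i, p) ∈ I × {p ≥ 1}`. -/
theorem statement4 {I : Type*} [Countable I] (ℓ θ : I → ℝ)
    (hℓ : ∀ i, 0 < ℓ i) (δ : ℝ) (hδ : δ < 2)
    (hsum : Summable fun i => Real.exp (-δ * ℓ i))
    (m : ℕ) (s : ℂ) (hs : 2 < s.re) :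
    (∀ (i : I) (p : ℕ), 1 ≤ p →
      (1 - Complex.exp (-((m : ℂ) / 2) * ((ℓ i : ℂ) + Complex.I * (θ i : ℂ)))
         * Complex.exp (-(p : ℂ) * ((ℓ i : ℂ) + Complex.I * (θ i : ℂ)))
         * Complex.exp (-s * (ℓ i : ℂ))) ≠ 0) ∧
    (Multipliable fun x : I × {p : ℕ // 1 ≤ p} =>
      (1 - Complex.exp (-((m : ℂ) / 2) * ((ℓ x.1 : ℂ) + Complex.I * (θ x.1 : ℂ)))
         * Complex.exp (-((x.2 : ℕ) : ℂ) * ((ℓ x.1 : ℂ) + Complex.I * (θ x.1 : ℂ)))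
         * Complex.exp (-s * (ℓ x.1 : ℂ)))⁻¹) ∧
    Zs ℓ θ (-((m : ℤ) + 2)) (s + (m : ℂ) / 2 + 1) ≠ 0 ∧
    Zs ℓ θ (-(m : ℤ)) (s + (m : ℂ) / 2 + 2) / Zs ℓ θ (-((m : ℤ) + 2)) (s + (m : ℂ) / 2 + 1) =
      ∏' x : I × {p : ℕ // 1 ≤ p},
        (1 - Complex.exp (-((m : ℂ) / 2) * ((ℓ x.1 : ℂ) + Complex.I * (θ x.1 : ℂ)))
           * Complex.exp (-((x.2 : ℕ) : ℂ) * ((ℓ x.1 : ℂ) + Complex.I * (θ x.1 : ℂ)))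
           * Complex.exp (-s * (ℓ x.1 : ℂ)))⁻¹ := by
  have hs2 : 2 ≤ s.re := hs.le
  have hAnorm := Aterm_norm_summable ℓ θ hℓ δ hδ hsum m s hs2
  have hAlt1 := Aterm_norm_lt_one ℓ θ m s hs2 hℓ
  have hFne : ∀ x : I × ℕ × ℕ, 1 - Aterm ℓ θ m s x ≠ 0 := fun x => one_sub_ne_zero (hAlt1 x)
  have hlog : Summable (fun x : I × ℕ × ℕ => Complex.log (1 - Aterm ℓ θ m s x)) :=
    summable_log_one_sub _ hAnorm
  -- injections
  have hσ1 : Function.Injective (fun x : I × ℕ × ℕ => (x.1, x.2.1 + 1, x.2.2 + 1)) := by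
    intro a b h
    simp only [Prod.ext_iff, Prod.mk.injEq] at h
    exact Prod.ext h.1 (Prod.ext (by omega) (by omega))
  have hσ2 : Function.Injective (fun x : I × ℕ × ℕ => (x.1, x.2.1 + 1, x.2.2)) := by
    intro a b h
    simp only [Prod.ext_iff, Prod.mk.injEq] at h
    exact Prod.ext h.1 (Prod.ext (by omega) h.2.2)
  have hτ : Function.Injective (fun y : I × {p : ℕ // 1 ≤ p} => ((y.1, (y.2 : ℕ), 0) : I × ℕ × ℕ)) := by
    intro a b h
    simp only [Prod.ext_iff, Prod.mk.injEq] at h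
    exact Prod.ext h.1 (Subtype.ext h.2.1)
  have hlog1 : Summable (fun x : I × ℕ × ℕ =>
      Complex.log (1 - Aterm ℓ θ m s (x.1, x.2.1 + 1, x.2.2 + 1))) :=
    hlog.comp_injective hσ1
  have hlog2 : Summable (fun x : I × ℕ × ℕ =>
      Complex.log (1 - Aterm ℓ θ m s (x.1, x.2.1 + 1, x.2.2))) :=
    hlog.comp_injective hσ2
  have hlog3 : Summable (fun y : I × {p : ℕ // 1 ≤ p} =>
      Complex.log (1 - Aterm ℓ θ m s (y.1, (y.2 : ℕ), 0))) :=
    hlog.comp_injective hτ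
  set S1 := ∑' x : I × ℕ × ℕ, Complex.log (1 - Aterm ℓ θ m s (x.1, x.2.1 + 1, x.2.2 + 1)) with hS1
  set S2 := ∑' x : I × ℕ × ℕ, Complex.log (1 - Aterm ℓ θ m s (x.1, x.2.1 + 1, x.2.2)) with hS2
  set S3 := ∑' y : I × ℕ, Complex.log (1 - Aterm ℓ θ m s (y.1, y.2 + 1, 0)) with hS3
  -- Z values
  have hZ1eq : Zs ℓ θ (-(m : ℤ)) (s + (m : ℂ) / 2 + 2) = Complex.exp S1 := by
    unfold Zs
    rw [tprod_congr (factor1 ℓ θ m s)]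
    exact (hasProd_log _ (fun x => hFne _) hlog1).tprod_eq
  have hZ2eq : Zs ℓ θ (-((m : ℤ) + 2)) (s + (m : ℂ) / 2 + 1) = Complex.exp S2 := by
    unfold Zs
    rw [tprod_congr (factor2 ℓ θ m s)]
    exact (hasProd_log _ (fun x => hFne _) hlog2).tprod_eq
  -- splitting
  have hsplit : S3 + S1 = S2 := by
    have h1 := hlog2.subtype {x : I × ℕ × ℕ | x.2.2 = 0}
    have h2 := hlog2.subtype ({x : I × ℕ × ℕ | x.2.2 = 0}ᶜ)
    have hc := Summable.tsum_add_tsum_compl (s := {x : I × ℕ × ℕ | x.2.2 = 0}) h1 h2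
    rw [hS3, hS1, hS2, ← hc]
    congr 1
    · rw [← Equiv.tsum_eq (eQzero (I := I))]
      rfl
    · rw [← Equiv.tsum_eq (eQpos (I := I))]
      rfl
  -- the target family
  have hfa : (fun x : I × {p : ℕ // 1 ≤ p} =>
      (1 - Complex.exp (-((m : ℂ) / 2) * ((ℓ x.1 : ℂ) + Complex.I * (θ x.1 : ℂ)))
         * Complex.exp (-((x.2 : ℕ) : ℂ) * ((ℓ x.1 : ℂ) + Complex.I * (θ x.1 : ℂ)))
         * Complex.exp (-s * (ℓ x.1 : ℂ)))⁻¹)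
      = fun x : I × {p : ℕ // 1 ≤ p} => (1 - Aterm ℓ θ m s (x.1, (x.2 : ℕ), 0))⁻¹ :=
    funext fun x => congrArg Inv.inv (factor3 ℓ θ m s x.1 (x.2 : ℕ))
  have hlog3' : Summable (fun y : I × {p : ℕ // 1 ≤ p} =>
      Complex.log ((1 - Aterm ℓ θ m s (y.1, (y.2 : ℕ), 0))⁻¹)) := by
    apply hlog3.neg.congr
    intro y
    rw [Complex.log_inv _ (one_sub_arg_ne_pi (hAlt1 _))]
  have hprod3 := hasProd_log _ (fun y : I × {p : ℕ // 1 ≤ p} =>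
      inv_ne_zero (hFne (y.1, (y.2 : ℕ), 0))) hlog3'
  have hPsum : (∑' y : I × {p : ℕ // 1 ≤ p},
      Complex.log ((1 - Aterm ℓ θ m s (y.1, (y.2 : ℕ), 0))⁻¹)) = -S3 := by
    rw [show (fun y : I × {p : ℕ // 1 ≤ p} =>
        Complex.log ((1 - Aterm ℓ θ m s (y.1, (y.2 : ℕ), 0))⁻¹))
        = fun y : I × {p : ℕ // 1 ≤ p} =>
          -Complex.log (1 - Aterm ℓ θ m s (y.1, (y.2 : ℕ), 0)) from
      funext fun y => Complex.log_inv _ (one_sub_arg_ne_pi (hAlt1 _))]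
    rw [tsum_neg, hS3, neg_inj]
    rw [← Equiv.tsum_eq ((Equiv.refl I).prodCongr eSucc)]
    rfl
  have hPeq : (∏' x : I × {p : ℕ // 1 ≤ p},
      (1 - Complex.exp (-((m : ℂ) / 2) * ((ℓ x.1 : ℂ) + Complex.I * (θ x.1 : ℂ)))
         * Complex.exp (-((x.2 : ℕ) : ℂ) * ((ℓ x.1 : ℂ) + Complex.I * (θ x.1 : ℂ)))
         * Complex.exp (-s * (ℓ x.1 : ℂ)))⁻¹) = Complex.exp (-S3) := by
    rw [hfa, hprod3.tprod_eq, hPsum]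
  refine ⟨?_, ?_, ?_, ?_⟩
  · intro i p hp
    rw [factor3 ℓ θ m s i p]
    exact hFne _
  · rw [hfa]
    exact hprod3.multipliable
  · rw [hZ2eq]; exact Complex.exp_ne_zero _
  · rw [hZ1eq, hZ2eq, hPeq, ← Complex.exp_sub]
    congr 1
    rw [← hsplit]
    ring
end

section
/- Let m ∈ ℕ and s ∈ ℂ with Re(s) > 2 + m/2, and define Z_{ρ_m}(k, w) := ∏_{l=0}^{m} Z(m − 2l + k, w − m/2 + l) for k ∈ ℤ. Then Z_{ρ_m}(−2, s + 1) and Z(−(m + 2), s + m/2 + 1) are nonzero, and Z_{ρ_m}(0, s) / Z_{ρ_m}(−2, s + 1) = Z(m, s − m/2) / Z(−(m + 2), s + m/2 + 1). -/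
open Complex Real Filter

/-- A summable nonneg real function has finite superlevel sets. -/
lemma finite_of_summable {I : Type*} {f : I → ℝ} (hf : Summable f) {ε : ℝ} (hε : 0 < ε) :
    {i | ε ≤ f i}.Finite := by
  have h := hf.tendsto_cofinite_zero.eventually (gt_mem_nhds hε)
  simpa [Filter.eventually_cofinite, not_lt] using h

section aux
variable {I : Type*} (ℓ : I → ℝ) (hℓ : ∀ i, 0 < ℓ i) (δ : ℝ) (hδ : δ < 2)
  (hsum : Summable fun i => Real.exp (-δ * ℓ i)) (t : ℝ) (ht : 2 ≤ t)

include hℓ hδ hsum ht in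
lemma summable_aux :
    Summable (fun x : I × ℕ × ℕ => Real.exp (-(((x.2.1 : ℝ) + (x.2.2 : ℝ) + t) * ℓ x.1))) := by
  have hfin : {i : I | ℓ i < 1}.Finite := by
    have hε : (0 : ℝ) < min 1 (Real.exp (-δ)) := lt_min one_pos (Real.exp_pos _)
    refine (finite_of_summable hsum hε).subset ?_
    intro i hi
    simp only [Set.mem_setOf_eq] at hi ⊢
    rcases le_or_gt δ 0 with h | h
    · exact le_trans (min_le_left (1:ℝ) (Real.exp (-δ))) (Real.one_le_exp (by nlinarith [ (hℓ i).le ]))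
    · exact le_trans (min_le_right (1:ℝ) (Real.exp (-δ))) (Real.exp_le_exp.2 (by nlinarith [hi.le, (hℓ i).le]))
  have hnn : 0 ≤ fun x : I × ℕ × ℕ => Real.exp (-(((x.2.1 : ℝ) + x.2.2 + t) * ℓ x.1)) := by
    intro x; exact (Real.exp_pos _).le
  rw [show (fun x : I × ℕ × ℕ => Real.exp (-(((x.2.1 : ℝ) + (x.2.2 : ℝ) + t) * ℓ x.1)))
      = fun x : I × (ℕ × ℕ) => Real.exp (-(((x.2.1 : ℝ) + (x.2.2 : ℝ) + t) * ℓ x.1)) from rfl,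
    summable_prod_of_nonneg hnn]
  have hgeo : ∀ i : I, Summable fun y : ℕ × ℕ =>
      Real.exp (-(((y.1 : ℝ) + y.2 + t) * ℓ i)) := by
    intro i
    have hr : Real.exp (-ℓ i) < 1 := Real.exp_lt_one_iff.2 (by linarith [hℓ i])
    have h1 : Summable fun p : ℕ => Real.exp (-t * ℓ i) * Real.exp (-ℓ i) ^ p :=
      (summable_geometric_of_lt_one (Real.exp_pos _).le hr).mul_left _
    have h2 : Summable fun q : ℕ => Real.exp (-ℓ i) ^ q :=
      summable_geometric_of_lt_one (Real.exp_pos _).le hr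
    refine (h1.mul_of_nonneg h2 (fun p => by positivity) (fun q => by positivity)).congr ?_
    intro y
    simp only [← Real.exp_nat_mul, ← Real.exp_add]
    ring_nf
  refine ⟨hgeo, ?_⟩
  -- dominating function on the cofinite set where 1 ≤ ℓ i
  have hD : Summable fun y : ℕ × ℕ => Real.exp (-(y.1 : ℝ)) * Real.exp (-(y.2 : ℝ)) := by
    have h1 : Summable fun p : ℕ => Real.exp (-(1:ℝ)) ^ p :=
      summable_geometric_of_lt_one (Real.exp_pos _).le (Real.exp_lt_one_iff.2 (by norm_num))
    refine (h1.mul_of_nonneg h1 (fun p => by positivity) (fun q => by positivity)).congr ?_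
    intro y
    simp [← Real.exp_nat_mul]
  set D : ℝ := ∑' y : ℕ × ℕ, Real.exp (-(y.1 : ℝ)) * Real.exp (-(y.2 : ℝ)) with hDdef
  refine Summable.of_norm_bounded_eventually (g := fun i => Real.exp (-δ * ℓ i) * D)
    (hsum.mul_right D) ?_
  have hco : {i : I | 1 ≤ ℓ i} ∈ cofinite := by
    rw [Filter.mem_cofinite]
    refine hfin.subset ?_
    intro i hi
    simpa using hi
  filter_upwards [hco] with i hi
  have hnn2 : 0 ≤ ∑' y : ℕ × ℕ, Real.exp (-(((y.1 : ℝ) + y.2 + t) * ℓ i)) :=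
    tsum_nonneg fun y => (Real.exp_pos _).le
  rw [Real.norm_of_nonneg hnn2]
  have hbound : ∀ y : ℕ × ℕ, Real.exp (-(((y.1 : ℝ) + y.2 + t) * ℓ i)) ≤
      Real.exp (-δ * ℓ i) * (Real.exp (-(y.1 : ℝ)) * Real.exp (-(y.2 : ℝ))) := by
    intro y
    rw [← Real.exp_add, ← Real.exp_add, Real.exp_le_exp]
    have h1 : (y.1 : ℝ) * 1 ≤ (y.1 : ℝ) * ℓ i :=
      mul_le_mul_of_nonneg_left hi (Nat.cast_nonneg _)
    have h2 : (y.2 : ℝ) * 1 ≤ (y.2 : ℝ) * ℓ i :=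
      mul_le_mul_of_nonneg_left hi (Nat.cast_nonneg _)
    have h3 : δ * ℓ i ≤ t * ℓ i := mul_le_mul_of_nonneg_right (by linarith) (hℓ i).le
    nlinarith
  calc ∑' y : ℕ × ℕ, Real.exp (-(((y.1 : ℝ) + y.2 + t) * ℓ i))
      ≤ ∑' y : ℕ × ℕ, Real.exp (-δ * ℓ i) * (Real.exp (-(y.1 : ℝ)) * Real.exp (-(y.2 : ℝ))) :=
        Summable.tsum_le_tsum hbound (hgeo i) (hD.mul_left _)
    _ = Real.exp (-δ * ℓ i) * D := by rw [tsum_mul_left]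

end aux

lemma Zs_ne_zero {I : Type*} (ℓ θ : I → ℝ) (hℓ : ∀ i, 0 < ℓ i) (δ : ℝ) (hδ : δ < 2)
    (hsum : Summable fun i => Real.exp (-δ * ℓ i)) (k : ℤ) (w : ℂ) (hw : 2 ≤ w.re) :
    Zs ℓ θ k w ≠ 0 := by
  set E : I × ℕ × ℕ → ℂ := fun x =>
    Complex.I * ((k : ℂ) / 2) * (θ x.1 : ℂ) + (-(x.2.1 : ℂ)) * ((ℓ x.1 : ℂ) + Complex.I * (θ x.1 : ℂ))
      + (-(x.2.2 : ℂ)) * ((ℓ x.1 : ℂ) - Complex.I * (θ x.1 : ℂ)) + (-w) * (ℓ x.1 : ℂ) with hE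
  have hre : ∀ x : I × ℕ × ℕ, (E x).re = -(((x.2.1 : ℝ) + (x.2.2 : ℝ) + w.re) * ℓ x.1) := by
    intro x
    simp [hE, Complex.add_re, Complex.mul_re, Complex.mul_im, Complex.div_re, Complex.div_im,
      Complex.normSq]
    ring
  have hEneg : ∀ x : I × ℕ × ℕ, (E x).re < 0 := by
    intro x
    rw [hre x]
    have := hℓ x.1
    have h1 : (0:ℝ) ≤ (x.2.1 : ℝ) := Nat.cast_nonneg _
    have h2 : (0:ℝ) ≤ (x.2.2 : ℝ) := Nat.cast_nonneg _
    nlinarith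
  have hnormE : ∀ x : I × ℕ × ℕ, ‖Complex.exp (E x)‖ =
      Real.exp (-(((x.2.1 : ℝ) + (x.2.2 : ℝ) + w.re) * ℓ x.1)) := by
    intro x
    rw [Complex.norm_exp, hre x]
  have hS := summable_aux ℓ hℓ δ hδ hsum w.re hw
  have hnormlt : ∀ x : I × ℕ × ℕ, ‖Complex.exp (E x)‖ < 1 := by
    intro x
    rw [Complex.norm_exp]
    exact Real.exp_lt_one_iff.2 (hEneg x)
  have hne : ∀ x : I × ℕ × ℕ, 1 - Complex.exp (E x) ≠ 0 := by
    intro x h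
    rw [sub_eq_zero] at h
    have := hnormlt x
    rw [← h] at this
    simp at this
  -- summability of logs
  have hlog : Summable fun x : I × ℕ × ℕ => Complex.log (1 - Complex.exp (E x)) := by
    refine Summable.of_norm_bounded_eventually
      (g := fun x => 2 * Real.exp (-(((x.2.1 : ℝ) + (x.2.2 : ℝ) + w.re) * ℓ x.1))) (hS.mul_left 2) ?_
    have hev : ∀ᶠ x : I × ℕ × ℕ in cofinite,
        Real.exp (-(((x.2.1 : ℝ) + (x.2.2 : ℝ) + w.re) * ℓ x.1)) < 1/2 :=
      hS.tendsto_cofinite_zero.eventually (gt_mem_nhds (by norm_num))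
    filter_upwards [hev] with x hx
    set c : ℂ := Complex.exp (E x) with hc
    have hcn : ‖c‖ ≤ 1/2 := by rw [hc, hnormE x]; exact hx.le
    have hcn1 : ‖-c‖ < 1 := by rw [norm_neg]; linarith
    have hb := Complex.norm_log_one_add_sub_self_le hcn1
    have h1 : (1 : ℂ) + -c = 1 - c := by ring
    rw [h1] at hb
    simp only [norm_neg] at hb hcn1
    have hinv : (1 - ‖c‖)⁻¹ ≤ 2 := by
      rw [inv_le_comm₀ (by linarith) (by norm_num)]
      linarith
    have h2 : ‖Complex.log (1 - c)‖ ≤ ‖Complex.log (1 - c) - (-c)‖ + ‖c‖ := by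
      calc ‖Complex.log (1 - c)‖ = ‖(Complex.log (1 - c) - (-c)) + (-c)‖ := by ring_nf
        _ ≤ ‖Complex.log (1 - c) - (-c)‖ + ‖-c‖ := norm_add_le _ _
        _ = ‖Complex.log (1 - c) - (-c)‖ + ‖c‖ := by rw [norm_neg]
    have h4 : ‖c‖ ^ 2 * (1 - ‖c‖)⁻¹ / 2 ≤ ‖c‖ := by
      nlinarith [mul_le_mul_of_nonneg_left hinv (sq_nonneg ‖c‖), norm_nonneg c, sq_nonneg ‖c‖]
    have this2 : ‖Complex.log (1 - c)‖ ≤ 2 * ‖c‖ := by nlinarith [hb, h2, h4]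
    calc ‖Complex.log (1 - c)‖ ≤ 2 * ‖c‖ := this2
      _ = 2 * Real.exp (-(((x.2.1 : ℝ) + (x.2.2 : ℝ) + w.re) * ℓ x.1)) := by rw [hc, hnormE x]
  -- identify Zs with the product of (1 - exp (E x))
  have hZeq : Zs ℓ θ k w = ∏' x : I × ℕ × ℕ, (1 - Complex.exp (E x)) := by
    unfold Zs
    refine tprod_congr fun x => ?_
    rw [hE]
    simp only [Complex.exp_add]
  have hprod := Complex.cexp_tsum_eq_tprod (f := fun x => 1 - Complex.exp (E x)) hne hlog
  rw [hZeq, ← hprod]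
  exact Complex.exp_ne_zero _

/-- `Z_{ρ_m}(σ_0, s) / Z_{ρ_m}(σ_{−2}, s+1) = Z(m, s−m/2) / Z(−(m+2), s+m/2+1)`,
where `Z_{ρ_m}(σ_k, w) = ∏_{l=0}^{m} Z(m−2l+k, w−m/2+l)`. -/
theorem statement6 {I : Type*} [Countable I] (ℓ θ : I → ℝ)
    (hℓ : ∀ i, 0 < ℓ i) (δ : ℝ) (hδ : δ < 2)
    (hsum : Summable fun i => Real.exp (-δ * ℓ i))
    (m : ℕ) (s : ℂ) (hs : 2 + (m : ℝ) / 2 < s.re)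
    (Zρ : ℤ → ℂ → ℂ)
    (hZρ : ∀ (k : ℤ) (w : ℂ), Zρ k w =
      ∏ l ∈ Finset.range (m + 1),
        Zs ℓ θ ((m : ℤ) - 2 * (l : ℤ) + k) (w - (m : ℂ) / 2 + (l : ℂ))) :
    Zρ (-2) (s + 1) ≠ 0 ∧
    Zs ℓ θ (-((m : ℤ) + 2)) (s + (m : ℂ) / 2 + 1) ≠ 0 ∧
    Zρ 0 s / Zρ (-2) (s + 1) =
      Zs ℓ θ (m : ℤ) (s - (m : ℂ) / 2) / Zs ℓ θ (-((m : ℤ) + 2)) (s + (m : ℂ) / 2 + 1) := by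
  set A : ℕ → ℂ := fun l => Zs ℓ θ ((m : ℤ) - 2 * (l : ℤ)) (s - (m : ℂ) / 2 + (l : ℂ)) with hA
  have hre2 : ∀ l : ℕ, (s - (m : ℂ) / 2 + (l : ℂ)).re = s.re - (m : ℝ) / 2 + l := by
    intro l
    simp [Complex.add_re, Complex.sub_re, Complex.div_re, Complex.normSq]
  have hAne : ∀ l : ℕ, A l ≠ 0 := by
    intro l
    refine Zs_ne_zero ℓ θ hℓ δ hδ hsum _ _ ?_
    rw [hre2 l]
    have : (0:ℝ) ≤ (l:ℝ) := Nat.cast_nonneg _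
    linarith
  have hZρ0 : Zρ 0 s = ∏ l ∈ Finset.range (m + 1), A l := by
    rw [hZρ]
    exact Finset.prod_congr rfl fun l _ => by rw [hA]; norm_num
  have hZρ2 : Zρ (-2) (s + 1) = ∏ l ∈ Finset.range (m + 1), A (l + 1) := by
    rw [hZρ]
    refine Finset.prod_congr rfl fun l _ => ?_
    rw [hA]
    have h1 : (m : ℤ) - 2 * (l : ℤ) + (-2) = (m : ℤ) - 2 * ((l + 1 : ℕ) : ℤ) := by push_cast; ring
    have h2 : s + 1 - (m : ℂ) / 2 + (l : ℂ) = s - (m : ℂ) / 2 + ((l + 1 : ℕ) : ℂ) := by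
      push_cast; ring
    rw [h1, h2]
  have hA0 : Zs ℓ θ (m : ℤ) (s - (m : ℂ) / 2) = A 0 := by
    rw [hA]
    norm_num
  have hAm1 : Zs ℓ θ (-((m : ℤ) + 2)) (s + (m : ℂ) / 2 + 1) = A (m + 1) := by
    rw [hA]
    have h1 : -((m : ℤ) + 2) = (m : ℤ) - 2 * ((m + 1 : ℕ) : ℤ) := by push_cast; ring
    have h2 : s + (m : ℂ) / 2 + 1 = s - (m : ℂ) / 2 + ((m + 1 : ℕ) : ℂ) := by push_cast; ring
    rw [h1, h2]
  have hden : Zρ (-2) (s + 1) ≠ 0 := by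
    rw [hZρ2]
    exact Finset.prod_ne_zero_iff.2 fun l _ => hAne _
  refine ⟨hden, by rw [hAm1]; exact hAne _, ?_⟩
  rw [hZρ0, hZρ2, hA0, hAm1]
  rw [div_eq_div_iff (Finset.prod_ne_zero_iff.2 fun l _ => hAne (l+1)) (hAne (m + 1))]
  rw [← Finset.prod_range_succ A (m + 1), Finset.prod_range_succ' A (m + 1)]
  ring
end

section
/- (Second factorization of the Ruelle zeta function.) Let m ∈ ℕ and s ∈ ℂ with Re(s) > 2 + m/2, and define Z_{ρ_m}(k, w) := ∏_{l=0}^{m} Z(m − 2l + k, w − m/2 + l) for k ∈ ℤ. Then Z_{ρ_m}(2, s + 1) and Z_{ρ_m}(−2, s + 1) are nonzero, and ∏_{l=0}^{m} R(m − 2l, s − m/2 + l) = ( Z_{ρ_m}(0, s) · Z_{ρ_m}(0, s + 2) ) / ( Z_{ρ_m}(2, s + 1) · Z_{ρ_m}(−2, s + 1) ). -/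
open Complex Real Filter

namespace S7


variable {I : Type*} (ℓ θ : I → ℝ)

noncomputable def cz (k : ℤ) (w : ℂ) (x : I × ℕ × ℕ) : ℂ :=
  Complex.exp (Complex.I * ((k : ℂ) / 2) * (θ x.1 : ℂ))
    * Complex.exp (-(x.2.1 : ℂ) * ((ℓ x.1 : ℂ) + Complex.I * (θ x.1 : ℂ)))
    * Complex.exp (-(x.2.2 : ℂ) * ((ℓ x.1 : ℂ) - Complex.I * (θ x.1 : ℂ)))
    * Complex.exp (-w * (ℓ x.1 : ℂ))

noncomputable def az (k : ℤ) (w : ℂ) (y : I × ℕ) : ℂ :=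
  Complex.exp (Complex.I * ((k : ℂ) / 2) * (θ y.1 : ℂ))
    * Complex.exp (-(y.2 : ℂ) * ((ℓ y.1 : ℂ) + Complex.I * (θ y.1 : ℂ)))
    * Complex.exp (-w * (ℓ y.1 : ℂ))

noncomputable def rt (k : ℤ) (w : ℂ) (i : I) : ℂ :=
  Complex.exp (Complex.I * ((k : ℂ) / 2) * (θ i : ℂ)) * Complex.exp (-w * (ℓ i : ℂ))

lemma cz_shift (k : ℤ) (w : ℂ) (x : I × ℕ × ℕ) :
    cz ℓ θ k w (x.1, x.2.1, x.2.2 + 1) = cz ℓ θ (k + 2) (w + 1) x := by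
  simp only [cz, ← Complex.exp_add]
  congr 1
  push_cast
  ring

lemma az_shift (k : ℤ) (w : ℂ) (y : I × ℕ) :
    az ℓ θ k w (y.1, y.2 + 1) = az ℓ θ (k - 2) (w + 1) y := by
  simp only [az, ← Complex.exp_add]
  congr 1
  push_cast
  ring

lemma cz_zero (k : ℤ) (w : ℂ) (y : I × ℕ) :
    cz ℓ θ k w (y.1, y.2, 0) = az ℓ θ k w y := by
  simp only [cz, az, ← Complex.exp_add]
  congr 1
  push_cast
  ring

lemma az_zero (k : ℤ) (w : ℂ) (i : I) :
    az ℓ θ k w (i, 0) = rt ℓ θ k w i := by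
  simp only [az, rt, ← Complex.exp_add]
  congr 1
  push_cast
  ring

lemma abs_cz (k : ℤ) (w : ℂ) (x : I × ℕ × ℕ) :
    ‖cz ℓ θ k w x‖ =
      Real.exp (-(((x.2.1 : ℝ) + (x.2.2 : ℝ)) + w.re) * ℓ x.1) := by
  simp only [cz, norm_mul, Complex.norm_exp, ← Real.exp_add]
  congr 1
  simp [Complex.mul_re, Complex.add_re, Complex.sub_re, Complex.mul_im]
  ring


-- master summability
lemma summable_master {I : Type*} {ℓ : I → ℝ} (hℓ : ∀ i, 0 < ℓ i) {δ : ℝ} (hδ : δ < 2)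
    (hsum : Summable fun i => Real.exp (-δ * ℓ i)) {a : ℝ} (ha : 2 < a) :
    Summable fun x : I × ℕ × ℕ =>
      Real.exp (-(((x.2.1 : ℝ) + (x.2.2 : ℝ)) + a) * ℓ x.1) := by
  set δ₀ : ℝ := max δ 0 with hδ₀def
  have hδ₀0 : 0 ≤ δ₀ := le_max_right _ _
  have hδ₀a : δ₀ ≤ a := by
    have := max_lt hδ (by norm_num : (0:ℝ) < 2)
    linarith
  have hs0 : Summable fun i => Real.exp (-δ₀ * ℓ i) := by
    refine hsum.of_nonneg_of_le (fun i => (Real.exp_pos _).le) (fun i => ?_)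
    apply Real.exp_le_exp.mpr
    nlinarith [(hℓ i).le, le_max_left δ 0]
  -- rewrite the target in factored form
  have hFeq : ∀ x : I × ℕ × ℕ,
      Real.exp (-(((x.2.1 : ℝ) + (x.2.2 : ℝ)) + a) * ℓ x.1) =
      Real.exp (-a * ℓ x.1) * Real.exp (-ℓ x.1) ^ x.2.1 * Real.exp (-ℓ x.1) ^ x.2.2 := by
    intro x
    rw [← Real.exp_nat_mul, ← Real.exp_nat_mul, ← Real.exp_add, ← Real.exp_add]
    congr 1
    ring
  -- the bad set is finite
  have hT : {i : I | ℓ i ≤ 1}.Finite := by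
    have h0 : Tendsto (fun i => Real.exp (-δ₀ * ℓ i)) cofinite (nhds 0) :=
      hs0.tendsto_cofinite_zero
    have h1 : {i : I | ¬ Real.exp (-δ₀ * ℓ i) < Real.exp (-δ₀)}.Finite := by
      have := h0 (Iio_mem_nhds (Real.exp_pos (-δ₀)))
      simpa [Filter.mem_cofinite, Set.preimage, Set.compl_setOf] using this
    refine h1.subset fun i hi => ?_
    simp only [Set.mem_setOf_eq, not_lt]
    apply Real.exp_le_exp.mpr
    have hi' : ℓ i ≤ 1 := hi
    nlinarith [hℓ i]
  set s : Set (I × ℕ × ℕ) := {x | ℓ x.1 ≤ 1} with hsdef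
  rw [← summable_subtype_and_compl]
  constructor
  · -- on s : finitely many i, each fiber summable
    have hTsub : Finite {i : I // ℓ i ≤ 1} := hT.to_subtype
    -- equivalence between ↥s and {i // ℓ i ≤ 1} × ℕ × ℕ
    let e : {i : I // ℓ i ≤ 1} × ℕ × ℕ ≃ ↥s :=
      { toFun := fun y => ⟨(y.1.1, y.2), y.1.2⟩
        invFun := fun x => (⟨x.1.1, x.2⟩, x.1.2)
        left_inv := fun y => rfl
        right_inv := fun x => rfl }
    rw [← e.summable_iff]
    have hnn : 0 ≤ fun y : {i : I // ℓ i ≤ 1} × ℕ × ℕ =>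
        Real.exp (-(((y.2.1 : ℝ) + (y.2.2 : ℝ)) + a) * ℓ y.1.1) :=
      fun y => (Real.exp_pos _).le
    refine (summable_prod_of_nonneg hnn).mpr ⟨fun t => ?_, Summable.of_finite⟩
    · -- fiber over t : ℕ × ℕ
      have hr : Real.exp (-ℓ t.1) < 1 := Real.exp_lt_one_iff.mpr (by linarith [hℓ t.1])
      have h1 : Summable fun p : ℕ => Real.exp (-a * ℓ t.1) * Real.exp (-ℓ t.1) ^ p :=
        (summable_geometric_of_lt_one (Real.exp_nonneg _) hr).mul_left _
      have h2 : Summable fun q : ℕ => Real.exp (-ℓ t.1) ^ q :=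
        summable_geometric_of_lt_one (Real.exp_nonneg _) hr
      have := h1.mul_of_nonneg h2 (fun p => mul_nonneg (Real.exp_pos _).le (pow_nonneg (Real.exp_nonneg _) _))
        (fun q => pow_nonneg (Real.exp_nonneg _) _)
      apply this.congr
      intro pq
      rw [hFeq (t.1, pq)]
  · -- on sᶜ : compare with summable majorant
    have h2 : Summable fun pq : ℕ × ℕ => Real.exp (-1 : ℝ) ^ pq.1 * Real.exp (-1 : ℝ) ^ pq.2 := by
      have hg : Summable fun n : ℕ => Real.exp (-1 : ℝ) ^ n :=
        summable_geometric_of_lt_one (Real.exp_nonneg _) (Real.exp_lt_one_iff.mpr (by norm_num))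
      exact hg.mul_of_nonneg hg (fun p => pow_nonneg (Real.exp_nonneg _) _)
        (fun q => pow_nonneg (Real.exp_nonneg _) _)
    have hG : Summable fun x : I × ℕ × ℕ =>
        Real.exp (-δ₀ * ℓ x.1) * (Real.exp (-1 : ℝ) ^ x.2.1 * Real.exp (-1 : ℝ) ^ x.2.2) :=
      hs0.mul_of_nonneg h2 (fun i => (Real.exp_pos _).le)
        (fun pq => mul_nonneg (pow_nonneg (Real.exp_nonneg _) _) (pow_nonneg (Real.exp_nonneg _) _))
    refine Summable.of_nonneg_of_le (fun x => (Real.exp_pos _).le) (fun x => ?_) (hG.subtype _)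
    rcases x with ⟨x, hx⟩
    have hx1 : 1 < ℓ x.1 := by
      simpa [hsdef, not_le] using hx
    rw [hFeq x]
    have hb1 : Real.exp (-a * ℓ x.1) ≤ Real.exp (-δ₀ * ℓ x.1) := by
      apply Real.exp_le_exp.mpr; nlinarith
    have hb2 : Real.exp (-ℓ x.1) ^ x.2.1 ≤ Real.exp (-1 : ℝ) ^ x.2.1 :=
      pow_le_pow_left₀ (Real.exp_nonneg _) (Real.exp_le_exp.mpr (by linarith)) _
    have hb3 : Real.exp (-ℓ x.1) ^ x.2.2 ≤ Real.exp (-1 : ℝ) ^ x.2.2 :=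
      pow_le_pow_left₀ (Real.exp_nonneg _) (Real.exp_le_exp.mpr (by linarith)) _
    calc Real.exp (-a * ℓ x.1) * Real.exp (-ℓ x.1) ^ x.2.1 * Real.exp (-ℓ x.1) ^ x.2.2
        ≤ Real.exp (-δ₀ * ℓ x.1) * Real.exp (-1 : ℝ) ^ x.2.1 * Real.exp (-1 : ℝ) ^ x.2.2 :=
          mul_le_mul (mul_le_mul hb1 hb2 (pow_nonneg (Real.exp_nonneg _) _) (Real.exp_pos _).le)
            hb3 (pow_nonneg (Real.exp_nonneg _) _) (by positivity)
      _ = Real.exp (-δ₀ * ℓ x.1) * (Real.exp (-1 : ℝ) ^ x.2.1 * Real.exp (-1 : ℝ) ^ x.2.2) := by ring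


-- summability of logs
lemma summable_log {α : Type*} {g : α → ℂ} (h : Summable fun x => ‖g x‖) :
    Summable fun x => Complex.log (1 - g x) := by
  apply Summable.of_norm
  set s : Set α := {x | ¬ ‖g x‖ < 1 / 2} with hsdef
  have hs : s.Finite := by
    have := h.tendsto_cofinite_zero (Iio_mem_nhds (by norm_num : (0:ℝ) < 1 / 2))
    simpa [hsdef, Filter.mem_cofinite, Set.preimage, Set.compl_setOf] using this
  refine (summable_subtype_and_compl (s := s)).mp ⟨?_, ?_⟩
  · haveI := hs.to_subtype
    exact Summable.of_finite
  · refine Summable.of_nonneg_of_le (fun x => norm_nonneg _) (fun x => ?_)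
      (((h.subtype _).mul_left (3 / 2 : ℝ)))
    rcases x with ⟨x, hx⟩
    have hx' : ‖g x‖ ≤ 1 / 2 := by
      have : ¬ x ∈ s := hx
      simp only [hsdef, Set.mem_setOf_eq, not_not] at this
      linarith
    have := Complex.norm_log_one_add_half_le_self (z := -g x)
      (by simpa using hx')
    calc ‖Complex.log (1 - g x)‖ = ‖Complex.log (1 + -g x)‖ := by rw [sub_eq_add_neg]
      _ ≤ 3 / 2 * ‖-g x‖ := this
      _ = 3 / 2 * ‖g x‖ := by rw [norm_neg]

-- product as exponential
lemma tprod_one_sub_eq_exp {α : Type*} {g : α → ℂ} (h : Summable fun x => ‖g x‖)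
    (hlt : ∀ x, ‖g x‖ < 1) :
    ∏' x, (1 - g x) = Complex.exp (∑' x, Complex.log (1 - g x)) := by
  have hne : ∀ (_ : Unit) (x : α), 1 - g x ≠ 0 := by
    intro _ x hzero
    have hgx : g x = 1 := by linear_combination -hzero
    have h1 := hlt x
    rw [hgx] at h1
    simp at h1
  have hf : ∀ _ : Unit, Summable fun x => Complex.log (1 - g x) :=
    fun _ => summable_log h
  have := Complex.cexp_tsum_eq_tprod (f := fun x => 1 - g x)
    (fun x => hne () x) (hf ())
  exact this.symm

-- splitting a tsum over β × ℕ
lemma tsum_split {β : Type*} (f : β × ℕ → ℂ) (hf : Summable f) :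
    ∑' x, f x = (∑' b, f (b, 0)) + ∑' x : β × ℕ, f (x.1, x.2 + 1) := by
  have h1 : ∀ b, Summable fun n => f (b, n) := fun b => hf.prod_factor b
  have hb0 : Summable fun b => f (b, 0) :=
    hf.comp_injective (i := fun b => (b, 0)) (fun a b hab => (Prod.mk.injEq _ _ _ _ ▸ hab).1)
  have hshift : Summable fun x : β × ℕ => f (x.1, x.2 + 1) := by
    apply hf.comp_injective (i := fun x : β × ℕ => (x.1, x.2 + 1))
    intro a b hab
    simp only [Prod.mk.injEq] at hab
    exact Prod.ext hab.1 (by omega)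
  have hbs : Summable fun b => ∑' n, f (b, n + 1) := hshift.prod
  rw [hf.tsum_prod' (fun b => h1 b)]
  have h2 : ∀ b, ∑' n, f (b, n) = f (b, 0) + ∑' n, f (b, n + 1) :=
    fun b => (h1 b).tsum_eq_zero_add
  rw [tsum_congr h2, hb0.tsum_add hbs, hshift.tsum_prod' (fun b => hshift.prod_factor b)]

lemma tsum_split2 {I : Type*} (f : I × ℕ × ℕ → ℂ) (hf : Summable f) :
    ∑' x, f x = (∑' y : I × ℕ, f (y.1, y.2, 0)) +
      ∑' x : I × ℕ × ℕ, f (x.1, x.2.1, x.2.2 + 1) := by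
  have hF : Summable fun y : (I × ℕ) × ℕ => f (y.1.1, y.1.2, y.2) :=
    (Equiv.prodAssoc I ℕ ℕ).summable_iff.mpr hf
  calc ∑' x : I × ℕ × ℕ, f x
      = ∑' y : (I × ℕ) × ℕ, f (y.1.1, y.1.2, y.2) :=
        ((Equiv.prodAssoc I ℕ ℕ).tsum_eq f).symm
    _ = (∑' b : I × ℕ, f (b.1, b.2, 0)) + ∑' y : (I × ℕ) × ℕ, f (y.1.1, y.1.2, y.2 + 1) :=
        tsum_split _ hF
    _ = (∑' y : I × ℕ, f (y.1, y.2, 0)) +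
        ∑' x : I × ℕ × ℕ, f (x.1, x.2.1, x.2.2 + 1) := by
        congr 1
        exact (Equiv.prodAssoc I ℕ ℕ).tsum_eq fun x : I × ℕ × ℕ => f (x.1, x.2.1, x.2.2 + 1)


section main

variable {I : Type*} {ℓ θ : I → ℝ}

lemma Zs_def (k : ℤ) (w : ℂ) : Zs ℓ θ k w = ∏' x : I × ℕ × ℕ, (1 - cz ℓ θ k w x) := rfl

lemma Rz_def (k : ℤ) (w : ℂ) : Rz ℓ θ k w = ∏' i : I, (1 - rt ℓ θ k w i) := rfl

variable (hℓ : ∀ i, 0 < ℓ i) {δ : ℝ} (hδ : δ < 2)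
  (hsum : Summable fun i => Real.exp (-δ * ℓ i))

include hℓ hδ hsum

lemma summable_abs_cz {k : ℤ} {w : ℂ} (hw : 2 < w.re) :
    Summable fun x : I × ℕ × ℕ => ‖cz ℓ θ k w x‖ := by
  apply (summable_master hℓ hδ hsum hw).congr
  intro x
  exact (abs_cz ℓ θ k w x).symm

lemma summable_abs_az {k : ℤ} {w : ℂ} (hw : 2 < w.re) :
    Summable fun y : I × ℕ => ‖az ℓ θ k w y‖ := by
  have h := (summable_abs_cz (θ := θ) hℓ hδ hsum (k := k) (w := w) hw).comp_injective
    (i := fun y : I × ℕ => (y.1, y.2, 0))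
    (fun a b hab => by
      simp only [Prod.mk.injEq] at hab
      exact Prod.ext hab.1 hab.2.1)
  apply h.congr
  intro y
  simp only [Function.comp_apply, cz_zero]

lemma summable_abs_rt {k : ℤ} {w : ℂ} (hw : 2 < w.re) :
    Summable fun i : I => ‖rt ℓ θ k w i‖ := by
  have h := (summable_abs_cz (θ := θ) hℓ hδ hsum (k := k) (w := w) hw).comp_injective
    (i := fun i : I => (i, 0, 0))
    (fun a b hab => by
      simp only [Prod.mk.injEq] at hab
      exact hab.1)
  apply h.congr
  intro i
  have : cz ℓ θ k w (i, 0, 0) = rt ℓ θ k w i := by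
    rw [cz_zero ℓ θ k w (i, 0), az_zero]
  simp only [Function.comp_apply, this]

omit hδ hsum

lemma abs_cz_lt_one {k : ℤ} {w : ℂ} (hw : 0 < w.re) (x : I × ℕ × ℕ) :
    ‖cz ℓ θ k w x‖ < 1 := by
  rw [abs_cz]
  apply Real.exp_lt_one_iff.mpr
  have h1 : (0:ℝ) ≤ (x.2.1 : ℝ) + (x.2.2 : ℝ) := by positivity
  have := hℓ x.1
  nlinarith

lemma abs_az_lt_one {k : ℤ} {w : ℂ} (hw : 0 < w.re) (y : I × ℕ) :
    ‖az ℓ θ k w y‖ < 1 := by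
  rw [← cz_zero ℓ θ k w y]
  exact abs_cz_lt_one hℓ hw _

lemma abs_rt_lt_one {k : ℤ} {w : ℂ} (hw : 0 < w.re) (i : I) :
    ‖rt ℓ θ k w i‖ < 1 := by
  rw [← az_zero ℓ θ k w i]
  exact abs_az_lt_one hℓ hw _

include hδ hsum

lemma Zs_exp {k : ℤ} {w : ℂ} (hw : 2 < w.re) :
    Zs ℓ θ k w = Complex.exp (∑' x : I × ℕ × ℕ, Complex.log (1 - cz ℓ θ k w x)) := by
  rw [Zs_def]
  exact tprod_one_sub_eq_exp (summable_abs_cz hℓ hδ hsum hw)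
    (abs_cz_lt_one hℓ (by linarith))

lemma Zs_ne_zero {k : ℤ} {w : ℂ} (hw : 2 < w.re) : Zs ℓ θ k w ≠ 0 := by
  rw [Zs_exp hℓ hδ hsum hw]
  exact Complex.exp_ne_zero _

lemma Az_exp {k : ℤ} {w : ℂ} (hw : 2 < w.re) :
    (∏' y : I × ℕ, (1 - az ℓ θ k w y)) =
      Complex.exp (∑' y : I × ℕ, Complex.log (1 - az ℓ θ k w y)) :=
  tprod_one_sub_eq_exp (summable_abs_az hℓ hδ hsum hw)
    (abs_az_lt_one hℓ (by linarith))

lemma Rz_exp {k : ℤ} {w : ℂ} (hw : 2 < w.re) :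
    Rz ℓ θ k w = Complex.exp (∑' i : I, Complex.log (1 - rt ℓ θ k w i)) := by
  rw [Rz_def]
  exact tprod_one_sub_eq_exp (summable_abs_rt hℓ hδ hsum hw)
    (abs_rt_lt_one hℓ (by linarith))

lemma E1 {k : ℤ} {w : ℂ} (hw : 2 < w.re) :
    Zs ℓ θ k w = (∏' y : I × ℕ, (1 - az ℓ θ k w y)) * Zs ℓ θ (k + 2) (w + 1) := by
  have hw1 : 2 < (w + 1).re := by
    simp only [Complex.add_re, Complex.one_re]
    linarith
  rw [Zs_exp hℓ hδ hsum hw, Zs_exp hℓ hδ hsum hw1, Az_exp hℓ hδ hsum hw, ← Complex.exp_add]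
  congr 1
  have hsummable : Summable fun x : I × ℕ × ℕ => Complex.log (1 - cz ℓ θ k w x) :=
    summable_log (summable_abs_cz hℓ hδ hsum hw)
  have h := tsum_split2 (fun x : I × ℕ × ℕ => Complex.log (1 - cz ℓ θ k w x)) hsummable
  rw [h]
  congr 1
  · exact tsum_congr fun y => by
      show Complex.log (1 - cz ℓ θ k w (y.1, y.2, 0)) = _
      rw [cz_zero]
  · exact tsum_congr fun x => by
      show Complex.log (1 - cz ℓ θ k w (x.1, x.2.1, x.2.2 + 1)) = _
      rw [cz_shift]

lemma E2 {k : ℤ} {w : ℂ} (hw : 2 < w.re) :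
    (∏' y : I × ℕ, (1 - az ℓ θ k w y)) =
      Rz ℓ θ k w * (∏' y : I × ℕ, (1 - az ℓ θ (k - 2) (w + 1) y)) := by
  have hw1 : 2 < (w + 1).re := by
    simp only [Complex.add_re, Complex.one_re]
    linarith
  rw [Az_exp hℓ hδ hsum hw, Az_exp hℓ hδ hsum hw1, Rz_exp hℓ hδ hsum hw, ← Complex.exp_add]
  congr 1
  have hsummable : Summable fun y : I × ℕ => Complex.log (1 - az ℓ θ k w y) :=
    summable_log (summable_abs_az hℓ hδ hsum hw)
  have h := tsum_split (fun y : I × ℕ => Complex.log (1 - az ℓ θ k w y)) hsummable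
  rw [h]
  congr 1
  · exact tsum_congr fun i => by
      show Complex.log (1 - az ℓ θ k w (i, 0)) = _
      rw [az_zero]
  · exact tsum_congr fun y => by
      show Complex.log (1 - az ℓ θ k w (y.1, y.2 + 1)) = _
      rw [az_shift]

lemma key {k : ℤ} {w : ℂ} (hw : 2 < w.re) :
    Rz ℓ θ k w * (Zs ℓ θ (k + 2) (w + 1) * Zs ℓ θ (k - 2) (w + 1)) =
      Zs ℓ θ k w * Zs ℓ θ k (w + 2) := by
  have hw1 : 2 < (w + 1).re := by
    simp only [Complex.add_re, Complex.one_re]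
    linarith
  have e1 := E1 (θ := θ) hℓ hδ hsum (k := k) (w := w) hw
  have e2 := E2 (θ := θ) hℓ hδ hsum (k := k) (w := w) hw
  have e3 := E1 (θ := θ) hℓ hδ hsum (k := k - 2) (w := w + 1) hw1
  rw [show k - 2 + 2 = k by ring, show w + 1 + 1 = w + 2 by ring] at e3
  rw [e1, e2, e3]
  ring

end main

end S7

/-- second factorization of the Ruelle zeta function,
`R_{ρ_m}(s) = Z_{ρ_m}(σ_0, s) Z_{ρ_m}(σ_0, s+2) / (Z_{ρ_m}(σ_2, s+1) Z_{ρ_m}(σ_{−2}, s+1))`. -/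
theorem statement7 {I : Type*} [Countable I] (ℓ θ : I → ℝ)
    (hℓ : ∀ i, 0 < ℓ i) (δ : ℝ) (hδ : δ < 2)
    (hsum : Summable fun i => Real.exp (-δ * ℓ i))
    (m : ℕ) (s : ℂ) (hs : 2 + (m : ℝ) / 2 < s.re)
    (Zρ : ℤ → ℂ → ℂ)
    (hZρ : ∀ (k : ℤ) (w : ℂ), Zρ k w =
      ∏ l ∈ Finset.range (m + 1),
        Zs ℓ θ ((m : ℤ) - 2 * (l : ℤ) + k) (w - (m : ℂ) / 2 + (l : ℂ))) :
    Zρ 2 (s + 1) ≠ 0 ∧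
    Zρ (-2) (s + 1) ≠ 0 ∧
    (∏ l ∈ Finset.range (m + 1),
        Rz ℓ θ ((m : ℤ) - 2 * (l : ℤ)) (s - (m : ℂ) / 2 + (l : ℂ))) =
      (Zρ 0 s * Zρ 0 (s + 2)) / (Zρ 2 (s + 1) * Zρ (-2) (s + 1)) := by
  have hre : ∀ (w : ℂ) (l : ℕ), (w - (m : ℂ) / 2 + (l : ℂ)).re = w.re - (m : ℝ) / 2 + (l : ℝ) := by
    intro w l
    have h2 : ((m : ℂ) / 2).re = (m : ℝ) / 2 := by
      rw [show (m : ℂ) / 2 = ((((m : ℝ) / 2 : ℝ)) : ℂ) by push_cast; ring]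
      exact Complex.ofReal_re _
    simp [Complex.sub_re, Complex.add_re, h2]
  have hl0 : ∀ l : ℕ, (0 : ℝ) ≤ (l : ℝ) := fun l => Nat.cast_nonneg l
  have hrw : ∀ l : ℕ, 2 < (s - (m : ℂ) / 2 + (l : ℂ)).re := by
    intro l
    rw [hre]
    have := hl0 l
    linarith
  have h2ne : Zρ 2 (s + 1) ≠ 0 := by
    rw [hZρ]
    apply Finset.prod_ne_zero_iff.mpr
    intro l _
    apply S7.Zs_ne_zero hℓ hδ hsum
    rw [hre]
    simp only [Complex.add_re, Complex.one_re]
    have := hl0 l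
    linarith
  have hm2ne : Zρ (-2) (s + 1) ≠ 0 := by
    rw [hZρ]
    apply Finset.prod_ne_zero_iff.mpr
    intro l _
    apply S7.Zs_ne_zero hℓ hδ hsum
    rw [hre]
    simp only [Complex.add_re, Complex.one_re]
    have := hl0 l
    linarith
  refine ⟨h2ne, hm2ne, ?_⟩
  rw [eq_div_iff (mul_ne_zero h2ne hm2ne)]
  rw [hZρ, hZρ, hZρ, hZρ]
  rw [← Finset.prod_mul_distrib, ← Finset.prod_mul_distrib, ← Finset.prod_mul_distrib]
  apply Finset.prod_congr rfl
  intro l _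
  have h1 : (m : ℤ) - 2 * (l : ℤ) + (-2) = ((m : ℤ) - 2 * (l : ℤ)) - 2 := by ring
  have h2 : s + 1 - (m : ℂ) / 2 + (l : ℂ) = (s - (m : ℂ) / 2 + (l : ℂ)) + 1 := by ring
  have h3 : s + 2 - (m : ℂ) / 2 + (l : ℂ) = (s - (m : ℂ) / 2 + (l : ℂ)) + 2 := by ring
  have h4 : (m : ℤ) - 2 * (l : ℤ) + 0 = (m : ℤ) - 2 * (l : ℤ) := by ring
  rw [h1, h2, h3, h4]
  exact S7.key hℓ hδ hsum (hrw l)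
end

section
/- (Zograf-type infinite product G_n as a ratio of Selberg zeta functions.) Let n ∈ ℕ (n ≥ 0 allowed) and s ∈ ℂ with Re(s) > 3/2 − n. Then the family over (i, k) ∈ I × {k ∈ ℕ : k ≥ n} given by (1 − exp(−(k + 1/2)(ℓ i + i·θ i))·exp(−s·ℓ i)) is multipliable; denoting its product by G_n(s) = ∏_{k ≥ n} R(−(2k+1), s + k + 1/2), one has Z(−(2n−1), s + n + 3/2) ≠ 0 and G_n(s) = Z(−(2n+1), s + n + 1/2) / Z(−(2n−1), s + n + 3/2). -/
/-- The general term of the Selberg zeta product. -/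
noncomputable def zterm {I : Type*} (ℓ θ : I → ℝ) (k : ℤ) (s : ℂ) (x : I × ℕ × ℕ) : ℂ :=
  Complex.exp (Complex.I * ((k : ℂ) / 2) * (θ x.1 : ℂ))
    * Complex.exp (-(x.2.1 : ℂ) * ((ℓ x.1 : ℂ) + Complex.I * (θ x.1 : ℂ)))
    * Complex.exp (-(x.2.2 : ℂ) * ((ℓ x.1 : ℂ) - Complex.I * (θ x.1 : ℂ)))
    * Complex.exp (-s * (ℓ x.1 : ℂ))

lemma Zs_eq_tprod_zterm {I : Type*} (ℓ θ : I → ℝ) (k : ℤ) (s : ℂ) :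
    Zs ℓ θ k s = ∏' x : I × ℕ × ℕ, (1 - zterm ℓ θ k s x) := rfl

lemma norm_zterm {I : Type*} (ℓ θ : I → ℝ) (k : ℤ) (s : ℂ) (x : I × ℕ × ℕ) :
    ‖zterm ℓ θ k s x‖ = Real.exp (-((x.2.1 : ℝ) + (x.2.2 : ℝ) + s.re) * ℓ x.1) := by
  rw [zterm, ← Complex.exp_add, ← Complex.exp_add, ← Complex.exp_add,
    Complex.norm_exp]
  congr 1
  simp [Complex.add_re, Complex.mul_re, Complex.sub_re, Complex.neg_re, Complex.div_re,
    Complex.I_re, Complex.I_im, Complex.ofReal_re, Complex.ofReal_im, Complex.sub_im,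
    Complex.add_im, Complex.mul_im, Complex.neg_im]
  ring

/-- Representation of an infinite product `∏ (1 - f i)` as the exponential of a sum of logs,
for absolutely summable `f` with all terms of norm `< 1`. -/
lemma aux_exp {ι : Type*} (f : ι → ℂ) (h1 : ∀ i, ‖f i‖ < 1) (hf : Summable fun i => ‖f i‖) :
    Multipliable (fun i => 1 - f i) ∧
    (∏' i, (1 - f i)) = Complex.exp (∑' i, Complex.log (1 - f i)) := by
  have hne : ∀ i, 1 - f i ≠ 0 := by
    intro i h
    rw [sub_eq_zero] at h
    have : ‖f i‖ = 1 := by rw [← h]; simp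
    exact absurd this (ne_of_lt (h1 i))
  have hlog : Summable (fun i => Complex.log (1 - f i)) := by
    apply Summable.of_norm_bounded_eventually (g := fun i => (3/2) * ‖f i‖) (hf.mul_left _)
    filter_upwards [hf.tendsto_cofinite_zero.eventually_lt_const (by norm_num : (0:ℝ) < 1/2)]
      with i hi
    have h2 : ‖(-f i)‖ ≤ 1/2 := by simpa using hi.le
    have := Complex.norm_log_one_add_half_le_self h2
    simpa [sub_eq_add_neg] using this
  constructor
  · exact Complex.multipliable_of_summable_log hlog
  · exact (Complex.cexp_tsum_eq_tprod hne hlog).symm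

/-- Summability of `exp(-(p+q+c)ℓ i)` over `I × ℕ × ℕ`. -/
lemma aux_sum {I : Type*} (ℓ : I → ℝ) (hℓ : ∀ i, 0 < ℓ i) (δ : ℝ) (hδ : δ < 2)
    (hsum : Summable fun i => Real.exp (-δ * ℓ i)) (c : ℝ) (hc : 2 ≤ c) :
    Summable (fun x : I × ℕ × ℕ =>
      Real.exp (-((x.2.1 : ℝ) + (x.2.2 : ℝ) + c) * ℓ x.1)) := by
  have hδc : δ ≤ c := le_trans hδ.le hc
  have fib : ∀ i : I, Summable (fun pq : ℕ × ℕ =>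
      Real.exp (-(((pq.1 : ℝ)) + (pq.2 : ℝ) + c) * ℓ i)) := by
    intro i
    have hr0 : (0:ℝ) ≤ Real.exp (-ℓ i) := (Real.exp_pos _).le
    have hr1 : Real.exp (-ℓ i) < 1 := Real.exp_lt_one_iff.mpr (by linarith [hℓ i])
    have hF : Summable (fun p : ℕ => Real.exp (-c * ℓ i) * (Real.exp (-ℓ i))^p) :=
      (summable_geometric_of_lt_one hr0 hr1).mul_left _
    have hG : Summable (fun q : ℕ => (Real.exp (-ℓ i))^q) :=
      summable_geometric_of_lt_one hr0 hr1
    have := Summable.mul_of_nonneg hF hG (fun p => by positivity) (fun q => by positivity)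
    apply this.congr
    intro pq
    rw [← Real.exp_nat_mul, ← Real.exp_nat_mul, ← Real.exp_add, ← Real.exp_add]
    ring_nf
  have fibval : ∀ i : I, (∑' pq : ℕ × ℕ, Real.exp (-(((pq.1 : ℝ)) + (pq.2 : ℝ) + c) * ℓ i))
      = Real.exp (-c * ℓ i) * ((1 - Real.exp (-ℓ i))⁻¹ * (1 - Real.exp (-ℓ i))⁻¹) := by
    intro i
    have hr0 : (0:ℝ) ≤ Real.exp (-ℓ i) := (Real.exp_pos _).le
    have hr1 : Real.exp (-ℓ i) < 1 := Real.exp_lt_one_iff.mpr (by linarith [hℓ i])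
    have hF : Summable (fun p : ℕ => Real.exp (-c * ℓ i) * (Real.exp (-ℓ i))^p) :=
      (summable_geometric_of_lt_one hr0 hr1).mul_left _
    have hG : Summable (fun q : ℕ => (Real.exp (-ℓ i))^q) :=
      summable_geometric_of_lt_one hr0 hr1
    have hFG := Summable.mul_of_nonneg hF hG (fun p => by positivity) (fun q => by positivity)
    have heq : (fun pq : ℕ × ℕ => Real.exp (-(((pq.1 : ℝ)) + (pq.2 : ℝ) + c) * ℓ i))
        = (fun pq : ℕ × ℕ => (Real.exp (-c * ℓ i) * (Real.exp (-ℓ i))^pq.1)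
            * (Real.exp (-ℓ i))^pq.2) := by
      funext pq
      rw [← Real.exp_nat_mul, ← Real.exp_nat_mul, ← Real.exp_add, ← Real.exp_add]
      ring_nf
    rw [heq, ← Summable.tsum_mul_tsum hF hG hFG, tsum_mul_left,
      tsum_geometric_of_lt_one hr0 hr1, mul_assoc]
  rw [summable_prod_of_nonneg (fun x => (Real.exp_pos _).le)]
  refine ⟨fib, ?_⟩
  set S : Set I := {i | ℓ i ≤ 1} with hS
  have hε : (0:ℝ) < Real.exp (min (-δ) 0) := Real.exp_pos _
  have hfin : S.Finite := by
    have hev := hsum.tendsto_cofinite_zero.eventually_lt_const hε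
    rw [Filter.eventually_cofinite] at hev
    apply hev.subset
    intro i hi
    simp only [Set.mem_setOf_eq, not_lt]
    apply Real.exp_le_exp.mpr
    rcases le_total δ 0 with h | h
    · exact le_trans (min_le_right _ _) (mul_nonneg (neg_nonneg.2 h) (hℓ i).le)
    · refine le_trans (min_le_left _ _) ?_
      have : ℓ i ≤ 1 := hi
      nlinarith
  rw [← hfin.summable_compl_iff]
  apply Summable.of_nonneg_of_le
    (g := fun j : ↥Sᶜ => ∑' pq : ℕ × ℕ, Real.exp (-(((pq.1 : ℝ)) + (pq.2 : ℝ) + c) * ℓ j))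
    (f := fun j : ↥Sᶜ =>
      Real.exp (-δ * ℓ j) * ((1 - Real.exp (-1))⁻¹ * (1 - Real.exp (-1))⁻¹))
  · intro j
    exact tsum_nonneg (fun pq => (Real.exp_pos _).le)
  · intro j
    have hj : 1 < ℓ (j : I) := not_le.mp j.2
    rw [fibval]
    have h1 : (0:ℝ) < 1 - Real.exp (-1) := by
      have := Real.exp_lt_one_iff.mpr (by norm_num : (-1:ℝ) < 0)
      linarith
    have h2 : Real.exp (-(ℓ (j:I))) ≤ Real.exp (-1) := Real.exp_le_exp.mpr (by linarith)
    have h3 : (1 - Real.exp (-ℓ (j:I)))⁻¹ ≤ (1 - Real.exp (-1))⁻¹ := by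
      apply inv_anti₀ h1
      linarith
    have h4 : (0:ℝ) < 1 - Real.exp (-ℓ (j:I)) := by linarith
    have h5 : Real.exp (-c * ℓ (j:I)) ≤ Real.exp (-δ * ℓ (j:I)) :=
      Real.exp_le_exp.mpr (by nlinarith [hℓ (j:I)])
    exact mul_le_mul h5 (mul_le_mul h3 h3 (by positivity) (by positivity))
      (by positivity) (by positivity)
  · exact (hsum.subtype _).mul_right _

/-- Reindexing the `q = 0` part of the zeta product by `I × {k ≥ n}`. -/
def eqv0 {I : Type*} (n : ℕ) : I × {k : ℕ // n ≤ k} ≃ {x : I × ℕ × ℕ // x.2.2 = 0} where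
  toFun := fun y => ⟨(y.1, y.2.1 - n, 0), rfl⟩
  invFun := fun x => (x.1.1, ⟨x.1.2.1 + n, Nat.le_add_left n _⟩)
  left_inv := by
    rintro ⟨i, ⟨k, hk⟩⟩
    simp [Nat.sub_add_cancel hk]
  right_inv := by
    rintro ⟨⟨i, p, q⟩, hq⟩
    simp only [Set.mem_setOf_eq] at hq
    subst hq
    simp

/-- Reindexing the `q ≥ 1` part of the zeta product by `I × ℕ × ℕ`. -/
def eqv1 {I : Type*} : I × ℕ × ℕ ≃ {x : I × ℕ × ℕ // ¬ x.2.2 = 0} where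
  toFun := fun y => ⟨(y.1, y.2.1, y.2.2 + 1), Nat.succ_ne_zero _⟩
  invFun := fun x => (x.1.1, x.1.2.1, x.1.2.2 - 1)
  left_inv := by rintro ⟨i, p, q⟩; simp
  right_inv := by
    rintro ⟨⟨i, p, q⟩, hq⟩
    have hq' : q ≠ 0 := by simpa using hq
    exact Subtype.ext (by simp; omega)

set_option maxHeartbeats 1000000 in
/-- the Zograf-type product `G_n(s) = ∏_{k ≥ n} R(σ_{−(2k+1)}, s+k+1/2)` converges
for `Re(s) > 3/2 − n` and equals `Z(−(2n+1), s+n+1/2) / Z(−(2n−1), s+n+3/2)`. -/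
theorem statement9 {I : Type*} [Countable I] (ℓ θ : I → ℝ)
    (hℓ : ∀ i, 0 < ℓ i) (δ : ℝ) (hδ : δ < 2)
    (hsum : Summable fun i => Real.exp (-δ * ℓ i))
    (n : ℕ) (s : ℂ) (hs : 3 / 2 - (n : ℝ) < s.re) :
    (Multipliable fun x : I × {k : ℕ // n ≤ k} =>
      (1 - Complex.exp (-(((x.2 : ℕ) : ℂ) + 1 / 2) * ((ℓ x.1 : ℂ) + Complex.I * (θ x.1 : ℂ)))
         * Complex.exp (-s * (ℓ x.1 : ℂ)))) ∧
    Zs ℓ θ (-(2 * (n : ℤ) - 1)) (s + (n : ℂ) + 3 / 2) ≠ 0 ∧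
    (∏' x : I × {k : ℕ // n ≤ k},
        (1 - Complex.exp (-(((x.2 : ℕ) : ℂ) + 1 / 2) * ((ℓ x.1 : ℂ) + Complex.I * (θ x.1 : ℂ)))
           * Complex.exp (-s * (ℓ x.1 : ℂ)))) =
      Zs ℓ θ (-(2 * (n : ℤ) + 1)) (s + (n : ℂ) + 1 / 2) /
        Zs ℓ θ (-(2 * (n : ℤ) - 1)) (s + (n : ℂ) + 3 / 2) := by
  set k₁ : ℤ := -(2 * (n : ℤ) + 1) with hk₁
  set k₂ : ℤ := -(2 * (n : ℤ) - 1) with hk₂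
  set s₁ : ℂ := s + (n : ℂ) + 1 / 2 with hs₁
  set s₂ : ℂ := s + (n : ℂ) + 3 / 2 with hs₂
  have hre1 : s₁.re = s.re + n + 1 / 2 := by simp [hs₁]
  have hre2 : s₂.re = s.re + n + 3 / 2 := by simp [hs₂]
  have hc1 : (2:ℝ) ≤ s₁.re := by rw [hre1]; linarith
  have hc2 : (2:ℝ) ≤ s₂.re := by rw [hre2]; linarith
  -- summability of the norms of the zeta terms
  have hnorm : ∀ (k : ℤ) (t : ℂ), (2:ℝ) ≤ t.re →
      Summable (fun x : I × ℕ × ℕ => ‖zterm ℓ θ k t x‖) := by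
    intro k t ht
    exact (aux_sum ℓ hℓ δ hδ hsum t.re ht).congr (fun x => (norm_zterm ℓ θ k t x).symm)
  have hlt : ∀ (k : ℤ) (t : ℂ), (2:ℝ) ≤ t.re → ∀ x : I × ℕ × ℕ, ‖zterm ℓ θ k t x‖ < 1 := by
    intro k t ht x
    rw [norm_zterm, Real.exp_lt_one_iff]
    have h1 : (0:ℝ) ≤ (x.2.1 : ℝ) := Nat.cast_nonneg _
    have h2 : (0:ℝ) ≤ (x.2.2 : ℝ) := Nat.cast_nonneg _
    nlinarith [hℓ x.1]
  have H1 := aux_exp (zterm ℓ θ k₁ s₁) (hlt k₁ s₁ hc1) (hnorm k₁ s₁ hc1)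
  have H2 := aux_exp (zterm ℓ θ k₂ s₂) (hlt k₂ s₂ hc2) (hnorm k₂ s₂ hc2)
  -- the key pointwise identities
  have hb : ∀ (x : I × {k : ℕ // n ≤ k}),
      zterm ℓ θ k₁ s₁ (x.1, (x.2 : ℕ) - n, 0) =
        Complex.exp (-(((x.2 : ℕ) : ℂ) + 1 / 2) * ((ℓ x.1 : ℂ) + Complex.I * (θ x.1 : ℂ)))
          * Complex.exp (-s * (ℓ x.1 : ℂ)) := by
    rintro ⟨i, ⟨k, hk⟩⟩
    simp only [zterm]
    rw [← Complex.exp_add, ← Complex.exp_add, ← Complex.exp_add, ← Complex.exp_add]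
    congr 1
    rw [Nat.cast_sub hk]
    push_cast [hk₁, hs₁]
    ring
  have hd : ∀ (x : I × ℕ × ℕ),
      zterm ℓ θ k₁ s₁ (x.1, x.2.1, x.2.2 + 1) = zterm ℓ θ k₂ s₂ x := by
    rintro ⟨i, p, q⟩
    simp only [zterm]
    rw [← Complex.exp_add, ← Complex.exp_add, ← Complex.exp_add,
      ← Complex.exp_add, ← Complex.exp_add, ← Complex.exp_add]
    congr 1
    push_cast [hk₁, hk₂, hs₁, hs₂]
    ring
  -- the G_n terms
  set b : I × {k : ℕ // n ≤ k} → ℂ := fun x =>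
    Complex.exp (-(((x.2 : ℕ) : ℂ) + 1 / 2) * ((ℓ x.1 : ℂ) + Complex.I * (θ x.1 : ℂ)))
      * Complex.exp (-s * (ℓ x.1 : ℂ)) with hbdef
  have hj : Function.Injective (fun x : I × {k : ℕ // n ≤ k} =>
      ((x.1, (x.2 : ℕ) - n, 0) : I × ℕ × ℕ)) := by
    rintro ⟨i, ⟨k, hk⟩⟩ ⟨i', ⟨k', hk'⟩⟩ h
    simp only [Prod.mk.injEq] at h
    obtain ⟨h1, h2, -⟩ := h
    subst h1
    have : k = k' := by omega
    subst this
    rfl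
  have hbnorm : Summable (fun x => ‖b x‖) := by
    have := (hnorm k₁ s₁ hc1).comp_injective hj
    exact this.congr (fun x => by rw [Function.comp_apply, hb x])
  have hblt : ∀ x, ‖b x‖ < 1 := by
    intro x
    have h := hlt k₁ s₁ hc1 (x.1, (x.2 : ℕ) - n, 0)
    rw [hb x] at h
    exact h
  have HG := aux_exp b hblt hbnorm
  refine ⟨HG.1, ?_, ?_⟩
  · rw [Zs_eq_tprod_zterm, H2.2]
    exact Complex.exp_ne_zero _
  · have hZden : Zs ℓ θ k₂ s₂ ≠ 0 := by
      rw [Zs_eq_tprod_zterm, H2.2]; exact Complex.exp_ne_zero _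
    rw [eq_div_iff hZden]
    have key0 : ∀ x : I × {k : ℕ // n ≤ k},
        zterm ℓ θ k₁ s₁ (((eqv0 n x : {x : I × ℕ × ℕ // x.2.2 = 0}) : I × ℕ × ℕ)) = b x :=
      fun x => hb x
    have key1 : ∀ x : I × ℕ × ℕ,
        zterm ℓ θ k₁ s₁ (((eqv1 x : {x : I × ℕ × ℕ // ¬ x.2.2 = 0}) : I × ℕ × ℕ)) =
          zterm ℓ θ k₂ s₂ x := fun x => hd x
    have hS : Multipliable (fun y : {x : I × ℕ × ℕ | x.2.2 = 0} =>
        1 - zterm ℓ θ k₁ s₁ (y : I × ℕ × ℕ)) := by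
      apply ((eqv0 n).multipliable_iff (f := fun y : {x : I × ℕ × ℕ | x.2.2 = 0} =>
        1 - zterm ℓ θ k₁ s₁ (y : I × ℕ × ℕ))).mp
      exact HG.1.congr (fun x => by
        rw [Function.comp_apply, ← key0 x])
    have hSc : Multipliable (fun y : ↥({x : I × ℕ × ℕ | x.2.2 = 0}ᶜ) =>
        1 - zterm ℓ θ k₁ s₁ (y : I × ℕ × ℕ)) := by
      apply (eqv1.multipliable_iff (f := fun y : ↥({x : I × ℕ × ℕ | x.2.2 = 0}ᶜ) =>
        1 - zterm ℓ θ k₁ s₁ (y : I × ℕ × ℕ))).mp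
      exact H2.1.congr (fun x => by
        rw [Function.comp_apply, ← key1 x])
    have hsplit := Multipliable.tprod_mul_tprod_compl (f := fun x : I × ℕ × ℕ => 1 - zterm ℓ θ k₁ s₁ x)
      (s := {x : I × ℕ × ℕ | x.2.2 = 0}) hS hSc
    have h0 : (∏' y : {x : I × ℕ × ℕ | x.2.2 = 0}, (1 - zterm ℓ θ k₁ s₁ (y : I × ℕ × ℕ)))
        = ∏' x : I × {k : ℕ // n ≤ k}, (1 - b x) :=
      (Equiv.tprod_eq (eqv0 n) (fun y : {x : I × ℕ × ℕ | x.2.2 = 0} =>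
        (1 - zterm ℓ θ k₁ s₁ (y : I × ℕ × ℕ)))).symm.trans
        (tprod_congr (fun x => by rw [key0 x]))
    have h1 : (∏' y : ↥({x : I × ℕ × ℕ | x.2.2 = 0}ᶜ), (1 - zterm ℓ θ k₁ s₁ (y : I × ℕ × ℕ)))
        = Zs ℓ θ k₂ s₂ := by
      rw [Zs_eq_tprod_zterm]
      exact (Equiv.tprod_eq eqv1 (fun y : ↥({x : I × ℕ × ℕ | x.2.2 = 0}ᶜ) =>
        (1 - zterm ℓ θ k₁ s₁ (y : I × ℕ × ℕ)))).symm.trans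
        (tprod_congr (fun x => by rw [key1 x]))
    rw [Zs_eq_tprod_zterm ℓ θ k₁ s₁, ← hsplit, h0, h1]
end

section
/- Let n ∈ ℕ with n ≥ 1 and s ∈ ℂ with Re(s) > n + 1. Let F_n(s) = ∏_{i ∈ I} ∏_{k ≥ n} (1 − exp(−k(ℓ i + i·θ i))·exp(−s·ℓ i)) and let R_{ρ_{2(n−1)}}(s) = ∏_{l=0}^{2(n−1)} R(2(n−1) − 2l, s − (n−1) + l). Then Z(−2(n−1), s + n + 1) and Z(2n, s − n + 2) are nonzero, and F_n(s)² · R_{ρ_{2(n−1)}}(s) = ( Z(2(n−1), s − n + 1) · Z(−2n, s + n) ) / ( Z(−2(n−1), s + n + 1) · Z(2n, s − n + 2) ). -/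
set_option maxHeartbeats 1000000

open Complex

/-! ### Generic infinite product helpers -/

lemma hasProd_one_sub' {J : Type*} {f : J → ℂ} (hf : Summable f) (h1 : ∀ x, ‖f x‖ < 1) :
    HasProd (fun x => 1 - f x) (Complex.exp (∑' x, Complex.log (1 - f x))) := by
  have h0 : ∀ x, 1 - f x ≠ 0 := by
    intro x hx
    rw [sub_eq_zero] at hx
    have := h1 x
    rw [← hx] at this
    simp at this
  have hlog : Summable fun x => Complex.log (1 - f x) := hf.clog_one_sub
  have H := hlog.hasSum.cexp
  have he : (cexp ∘ fun x => Complex.log (1 - f x)) = fun x => 1 - f x := by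
    funext x; exact Complex.exp_log (h0 x)
  rwa [he] at H

lemma multipliable_one_sub' {J : Type*} {f : J → ℂ} (hf : Summable f) (h1 : ∀ x, ‖f x‖ < 1) :
    Multipliable (fun x => 1 - f x) := ⟨_, hasProd_one_sub' hf h1⟩

lemma tprod_one_sub_ne_zero' {J : Type*} {f : J → ℂ} (hf : Summable f) (h1 : ∀ x, ‖f x‖ < 1) :
    (∏' x, (1 - f x)) ≠ 0 := by
  rw [(hasProd_one_sub' hf h1).tprod_eq]
  exact Complex.exp_ne_zero _

private def eqvZero' (J : Type*) : J ≃ {x : J × ℕ | x.2 = 0} where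
  toFun := fun j => ⟨(j, 0), rfl⟩
  invFun := fun x => x.1.1
  left_inv := fun _ => rfl
  right_inv := by
    rintro ⟨⟨j, q⟩, hq⟩
    simp only [Set.mem_setOf_eq] at hq
    subst hq; rfl

private def eqvSucc' (J : Type*) : J × ℕ ≃ ↥({x : J × ℕ | x.2 = 0}ᶜ) where
  toFun := fun x => ⟨(x.1, x.2 + 1), by simp⟩
  invFun := fun x => (x.1.1, x.1.2 - 1)
  left_inv := fun _ => rfl
  right_inv := by
    rintro ⟨⟨j, q⟩, hq⟩
    simp only [Set.mem_compl_iff, Set.mem_setOf_eq] at hq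
    have hq1 : q - 1 + 1 = q := Nat.succ_pred_eq_of_ne_zero hq
    simp [hq1]

/-- Split off the `q = 0` slice of a product `∏ (1 - g x)` over `J × ℕ`. -/
lemma tprod_split_zero' {J : Type*} (g : J × ℕ → ℂ) (hg : Summable g)
    (h1 : ∀ x, ‖g x‖ < 1) :
    ∏' x, (1 - g x) = (∏' j, (1 - g (j, 0))) * ∏' x : J × ℕ, (1 - g (x.1, x.2 + 1)) := by
  classical
  have hms : Multipliable ((fun x => 1 - g x) ∘ ((↑) : {x : J × ℕ | x.2 = 0} → J × ℕ)) :=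
    multipliable_one_sub' (hg.subtype _) (fun x => h1 x)
  have hmsc : Multipliable
      ((fun x => 1 - g x) ∘ ((↑) : ↥({x : J × ℕ | x.2 = 0}ᶜ) → J × ℕ)) :=
    multipliable_one_sub' (hg.subtype _) (fun x => h1 x)
  rw [← Multipliable.tprod_mul_tprod_compl (s := {x : J × ℕ | x.2 = 0}) hms hmsc]
  congr 1
  · rw [← (eqvZero' J).tprod_eq (fun x : {x : J × ℕ | x.2 = 0} => 1 - g x)]
    exact tprod_congr fun x => by simp [eqvZero']
  · rw [← (eqvSucc' J).tprod_eq (fun x : ↥({x : J × ℕ | x.2 = 0}ᶜ) => 1 - g x)]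
    exact tprod_congr fun x => by simp [eqvSucc']

/-! ### Elementary exponential identities -/

lemma norm_term4' (k : ℤ) (s : ℂ) (a t : ℝ) (p q : ℕ) :
    ‖Complex.exp (Complex.I * ((k : ℂ) / 2) * (t : ℂ))
      * Complex.exp (-(p : ℂ) * ((a : ℂ) + Complex.I * (t : ℂ)))
      * Complex.exp (-(q : ℂ) * ((a : ℂ) - Complex.I * (t : ℂ)))
      * Complex.exp (-s * (a : ℂ))‖ = Real.exp (-(s.re + p + q) * a) := by
  rw [← Complex.exp_add, ← Complex.exp_add, ← Complex.exp_add,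
    Complex.norm_exp]
  congr 1
  simp [Complex.add_re, Complex.mul_re, Complex.sub_re, Complex.sub_im, Complex.add_im,
    Complex.div_ofNat_re, Complex.neg_re, Complex.neg_im, Complex.mul_im]
  ring

lemma norm_term3' (k : ℤ) (s : ℂ) (a t : ℝ) (p : ℕ) :
    ‖Complex.exp (Complex.I * ((k : ℂ) / 2) * (t : ℂ))
      * Complex.exp (-(p : ℂ) * ((a : ℂ) + Complex.I * (t : ℂ)))
      * Complex.exp (-s * (a : ℂ))‖ = Real.exp (-(s.re + p) * a) := by
  rw [← Complex.exp_add, ← Complex.exp_add, Complex.norm_exp]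
  congr 1
  simp [Complex.add_re, Complex.mul_re, Complex.sub_re, Complex.sub_im, Complex.add_im,
    Complex.div_ofNat_re, Complex.neg_re, Complex.neg_im, Complex.mul_im]
  ring

lemma shift_q' (k : ℤ) (s : ℂ) (a t : ℝ) (p q : ℕ) :
    Complex.exp (Complex.I * ((k : ℂ) / 2) * (t : ℂ))
      * Complex.exp (-(p : ℂ) * ((a : ℂ) + Complex.I * (t : ℂ)))
      * Complex.exp (-((q + 1 : ℕ) : ℂ) * ((a : ℂ) - Complex.I * (t : ℂ)))
      * Complex.exp (-s * (a : ℂ))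
    = Complex.exp (Complex.I * (((k + 2 : ℤ) : ℂ) / 2) * (t : ℂ))
      * Complex.exp (-(p : ℂ) * ((a : ℂ) + Complex.I * (t : ℂ)))
      * Complex.exp (-(q : ℂ) * ((a : ℂ) - Complex.I * (t : ℂ)))
      * Complex.exp (-(s + 1) * (a : ℂ)) := by
  rw [← Complex.exp_add, ← Complex.exp_add, ← Complex.exp_add,
    ← Complex.exp_add, ← Complex.exp_add, ← Complex.exp_add]
  congr 1
  push_cast
  ring

lemma shift_p' (k : ℤ) (s : ℂ) (a t : ℝ) (p : ℕ) :
    Complex.exp (Complex.I * ((k : ℂ) / 2) * (t : ℂ))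
      * Complex.exp (-((p + 1 : ℕ) : ℂ) * ((a : ℂ) + Complex.I * (t : ℂ)))
      * Complex.exp (-s * (a : ℂ))
    = Complex.exp (Complex.I * (((k - 2 : ℤ) : ℂ) / 2) * (t : ℂ))
      * Complex.exp (-(p : ℂ) * ((a : ℂ) + Complex.I * (t : ℂ)))
      * Complex.exp (-(s + 1) * (a : ℂ)) := by
  rw [← Complex.exp_add, ← Complex.exp_add, ← Complex.exp_add, ← Complex.exp_add]
  congr 1
  push_cast
  ring

lemma shift_F' (n p : ℕ) (s : ℂ) (a t : ℝ) :
    Complex.exp (Complex.I * (((-2 * (n : ℤ) : ℤ) : ℂ) / 2) * (t : ℂ))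
      * Complex.exp (-(p : ℂ) * ((a : ℂ) + Complex.I * (t : ℂ)))
      * Complex.exp (-(s + (n : ℂ)) * (a : ℂ))
    = Complex.exp (-((p + n : ℕ) : ℂ) * ((a : ℂ) + Complex.I * (t : ℂ)))
      * Complex.exp (-s * (a : ℂ)) := by
  rw [← Complex.exp_add, ← Complex.exp_add, ← Complex.exp_add]
  congr 1
  push_cast
  ring

/-! ### Summability of the master majorant -/

private def eqvFst' {I : Type*} (S : Set I) :
    ↥S × (ℕ × ℕ) ≃ ↥{x : I × ℕ × ℕ | x.1 ∈ S} where
  toFun := fun y => ⟨(y.1.1, y.2), y.1.2⟩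
  invFun := fun x => (⟨x.1.1, x.2⟩, x.1.2)
  left_inv := fun _ => rfl
  right_inv := fun _ => rfl

lemma inner_summable' (a : ℝ) (ha : 0 < a) (c : ℝ) :
    Summable fun pq : ℕ × ℕ => Real.exp (-(c + pq.1 + pq.2) * a) := by
  have hr : (0:ℝ) ≤ Real.exp (-a) := (Real.exp_pos _).le
  have hr1 : Real.exp (-a) < 1 := by
    rw [Real.exp_lt_one_iff]; linarith
  have he : (fun pq : ℕ × ℕ => Real.exp (-(c + pq.1 + pq.2) * a))
      = fun pq : ℕ × ℕ => (Real.exp (-c * a) * Real.exp (-a) ^ pq.1) * Real.exp (-a) ^ pq.2 := by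
    funext pq
    rw [← Real.exp_nat_mul, ← Real.exp_nat_mul, ← Real.exp_add, ← Real.exp_add]
    ring_nf
  rw [he]
  exact Summable.mul_of_nonneg
    ((summable_geometric_of_lt_one hr hr1).mul_left _)
    (summable_geometric_of_lt_one hr hr1)
    (fun p => mul_nonneg (Real.exp_pos _).le (pow_nonneg hr _))
    (fun q => pow_nonneg hr _)

lemma master_summable' {I : Type*} (ℓ : I → ℝ) (hℓ : ∀ i, 0 < ℓ i) (δ : ℝ) (hδ : δ < 2)
    (hsum : Summable fun i => Real.exp (-δ * ℓ i)) :
    Summable fun x : I × ℕ × ℕ => Real.exp (-(2 + x.2.1 + x.2.2) * ℓ x.1) := by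
  classical
  set δ' : ℝ := max δ 1 with hδ'def
  have hδ'2 : δ' < 2 := max_lt hδ one_lt_two
  have hδ'1 : (1:ℝ) ≤ δ' := le_max_right _ _
  have hsum' : Summable fun i => Real.exp (-δ' * ℓ i) := by
    refine Summable.of_nonneg_of_le (fun i => (Real.exp_pos _).le) (fun i => ?_) hsum
    exact Real.exp_le_exp.2 (by nlinarith [hℓ i, le_max_left δ 1])
  have hS : {i : I | ℓ i < 1}.Finite := by
    have h0 : Filter.Tendsto (fun i => Real.exp (-δ' * ℓ i)) Filter.cofinite (nhds 0) :=
      hsum'.tendsto_cofinite_zero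
    have hev : ∀ᶠ i in Filter.cofinite, Real.exp (-δ' * ℓ i) < Real.exp (-δ') :=
      h0.eventually (gt_mem_nhds (Real.exp_pos _))
    refine (Filter.eventually_cofinite.mp hev).subset ?_
    intro i hi
    simp only [Set.mem_setOf_eq] at hi ⊢
    refine not_lt.2 (Real.exp_le_exp.2 ?_)
    nlinarith [hℓ i]
  set s' : Set (I × ℕ × ℕ) := {x | x.1 ∈ {i : I | ℓ i < 1}} with hs'def
  have part1 : Summable ((fun x : I × ℕ × ℕ => Real.exp (-(2 + x.2.1 + x.2.2) * ℓ x.1)) ∘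
      ((↑) : s' → I × ℕ × ℕ)) := by
    rw [← (eqvFst' (I := I) {i : I | ℓ i < 1}).summable_iff]
    have : Finite ↥{i : I | ℓ i < 1} := hS.to_subtype
    refine (summable_prod_of_nonneg (fun y => (Real.exp_pos _).le)).mpr ⟨?_, ?_⟩
    · intro i
      exact inner_summable' (ℓ i.1) (hℓ i.1) 2
    · exact Summable.of_finite
  have part2 : Summable ((fun x : I × ℕ × ℕ => Real.exp (-(2 + x.2.1 + x.2.2) * ℓ x.1)) ∘
      ((↑) : ↥s'ᶜ → I × ℕ × ℕ)) := by
    have hgeo1 : Summable fun p : ℕ => Real.exp (-(p : ℝ)) := by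
      have he : (fun p : ℕ => Real.exp (-(p : ℝ))) = fun p : ℕ => Real.exp (-1) ^ p := by
        funext p; rw [← Real.exp_nat_mul]; ring_nf
      rw [he]
      exact summable_geometric_of_lt_one (Real.exp_pos _).le
        (by rw [Real.exp_lt_one_iff]; norm_num)
    have hbig : Summable fun x : I × ℕ × ℕ =>
        Real.exp (-δ' * ℓ x.1) * (Real.exp (-(x.2.1 : ℝ)) * Real.exp (-(x.2.2 : ℝ))) :=
      Summable.mul_of_nonneg hsum'
        (Summable.mul_of_nonneg hgeo1 hgeo1 (fun p => (Real.exp_pos _).le)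
          (fun q => (Real.exp_pos _).le))
        (fun i => (Real.exp_pos _).le)
        (fun pq => mul_nonneg (Real.exp_pos _).le (Real.exp_pos _).le)
    refine Summable.of_nonneg_of_le (fun x => (Real.exp_pos _).le) (fun x => ?_)
      (hbig.subtype _)
    obtain ⟨⟨i, p, q⟩, hx⟩ := x
    simp only [hs'def, Set.mem_compl_iff, Set.mem_setOf_eq, not_lt] at hx
    have ha : (0:ℝ) < ℓ i := hℓ i
    have key : Real.exp (-(2 + (p:ℝ) + q) * ℓ i)
        = Real.exp (-2 * ℓ i) * (Real.exp (-(p:ℝ) * ℓ i) * Real.exp (-(q:ℝ) * ℓ i)) := by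
      rw [← Real.exp_add, ← Real.exp_add]; ring_nf
    simp only [Function.comp_apply]
    rw [key]
    have b1 : Real.exp (-2 * ℓ i) ≤ Real.exp (-δ' * ℓ i) :=
      Real.exp_le_exp.2 (by nlinarith)
    have b2 : Real.exp (-(p:ℝ) * ℓ i) ≤ Real.exp (-(p:ℝ)) :=
      Real.exp_le_exp.2 (by nlinarith [Nat.cast_nonneg (α := ℝ) p])
    have b3 : Real.exp (-(q:ℝ) * ℓ i) ≤ Real.exp (-(q:ℝ)) :=
      Real.exp_le_exp.2 (by nlinarith [Nat.cast_nonneg (α := ℝ) q])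
    exact mul_le_mul b1 (mul_le_mul b2 b3 (Real.exp_pos _).le (Real.exp_pos _).le)
      (mul_nonneg (Real.exp_pos _).le (Real.exp_pos _).le) (Real.exp_pos _).le
  exact part1.add_compl part2

/-- The auxiliary product `Sl(k,s) = ∏_{i,p} (1 − e^{i(k/2)θ_i} e^{−p(ℓ_i+iθ_i)} e^{−s ℓ_i})`. -/
noncomputable def Sl {I : Type*} (ℓ θ : I → ℝ) (k : ℤ) (s : ℂ) : ℂ :=
  ∏' y : I × ℕ,
    (1 - Complex.exp (Complex.I * ((k : ℂ) / 2) * (θ y.1 : ℂ))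
       * Complex.exp (-(y.2 : ℂ) * ((ℓ y.1 : ℂ) + Complex.I * (θ y.1 : ℂ)))
       * Complex.exp (-s * (ℓ y.1 : ℂ)))

/-- Term of the Selberg zeta function. -/
noncomputable def gZ {I : Type*} (ℓ θ : I → ℝ) (k : ℤ) (s : ℂ) : I × ℕ × ℕ → ℂ := fun x =>
  Complex.exp (Complex.I * ((k : ℂ) / 2) * (θ x.1 : ℂ))
    * Complex.exp (-(x.2.1 : ℂ) * ((ℓ x.1 : ℂ) + Complex.I * (θ x.1 : ℂ)))
    * Complex.exp (-(x.2.2 : ℂ) * ((ℓ x.1 : ℂ) - Complex.I * (θ x.1 : ℂ)))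
    * Complex.exp (-s * (ℓ x.1 : ℂ))

/-- Term of `Sl`. -/
noncomputable def gS {I : Type*} (ℓ θ : I → ℝ) (k : ℤ) (s : ℂ) : I × ℕ → ℂ := fun y =>
  Complex.exp (Complex.I * ((k : ℂ) / 2) * (θ y.1 : ℂ))
    * Complex.exp (-(y.2 : ℂ) * ((ℓ y.1 : ℂ) + Complex.I * (θ y.1 : ℂ)))
    * Complex.exp (-s * (ℓ y.1 : ℂ))

section params

variable {I : Type*} (ℓ θ : I → ℝ) (hℓ : ∀ i, 0 < ℓ i)
  (hmaster : Summable fun x : I × ℕ × ℕ => Real.exp (-(2 + x.2.1 + x.2.2) * ℓ x.1))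

lemma Zs_eq_tprod (k : ℤ) (s : ℂ) : Zs ℓ θ k s = ∏' x, (1 - gZ ℓ θ k s x) := rfl

lemma Sl_eq_tprod (k : ℤ) (s : ℂ) : Sl ℓ θ k s = ∏' y, (1 - gS ℓ θ k s y) := rfl

include hℓ hmaster in
lemma gZ_summable (k : ℤ) (s : ℂ) (h2 : 2 ≤ s.re) : Summable (gZ ℓ θ k s) := by
  apply Summable.of_norm
  refine Summable.of_nonneg_of_le (fun x => norm_nonneg _) (fun x => ?_) hmaster
  simp only [gZ]
  rw [norm_term4']
  refine Real.exp_le_exp.2 ?_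
  have := hℓ x.1
  nlinarith [Nat.cast_nonneg (α := ℝ) x.2.1, Nat.cast_nonneg (α := ℝ) x.2.2]

include hℓ in
lemma gZ_norm_lt (k : ℤ) (s : ℂ) (h2 : 2 ≤ s.re) : ∀ x, ‖gZ ℓ θ k s x‖ < 1 := by
  intro x
  simp only [gZ]
  rw [norm_term4', ← Real.exp_zero]
  apply Real.exp_lt_exp.2
  have := hℓ x.1
  nlinarith [Nat.cast_nonneg (α := ℝ) x.2.1, Nat.cast_nonneg (α := ℝ) x.2.2]

include hℓ hmaster in
lemma gS_summable (k : ℤ) (s : ℂ) (h2 : 2 ≤ s.re) : Summable (gS ℓ θ k s) := by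
  apply Summable.of_norm
  have hinj : Function.Injective (fun y : I × ℕ => (y.1, y.2, 0) : I × ℕ → I × ℕ × ℕ) := by
    intro a b h
    simp only [Prod.ext_iff] at h ⊢
    exact ⟨h.1, h.2.1⟩
  have hc := hmaster.comp_injective hinj
  refine Summable.of_nonneg_of_le (fun y => norm_nonneg _) (fun y => ?_) hc
  simp only [gS, Function.comp_apply]
  rw [norm_term3']
  refine Real.exp_le_exp.2 ?_
  have := hℓ y.1
  push_cast
  nlinarith [Nat.cast_nonneg (α := ℝ) y.2]

include hℓ in
lemma gS_norm_lt (k : ℤ) (s : ℂ) (h2 : 2 ≤ s.re) : ∀ y, ‖gS ℓ θ k s y‖ < 1 := by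
  intro y
  simp only [gS]
  rw [norm_term3', ← Real.exp_zero]
  apply Real.exp_lt_exp.2
  have := hℓ y.1
  nlinarith [Nat.cast_nonneg (α := ℝ) y.2]

include hℓ hmaster in
lemma Zs_ne_zero_s10 (k : ℤ) (s : ℂ) (h2 : 2 ≤ s.re) : Zs ℓ θ k s ≠ 0 := by
  rw [Zs_eq_tprod]
  exact tprod_one_sub_ne_zero' (gZ_summable ℓ θ hℓ hmaster k s h2) (gZ_norm_lt ℓ θ hℓ k s h2)

include hℓ hmaster in
lemma Zs_step (k : ℤ) (s : ℂ) (h2 : 2 ≤ s.re) :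
    Zs ℓ θ k s = Sl ℓ θ k s * Zs ℓ θ (k + 2) (s + 1) := by
  have hsumZ : Summable (gZ ℓ θ k s) := gZ_summable ℓ θ hℓ hmaster k s h2
  have hltZ := gZ_norm_lt ℓ θ hℓ k s h2
  have hg' : Summable (fun y : (I × ℕ) × ℕ => gZ ℓ θ k s (Equiv.prodAssoc I ℕ ℕ y)) :=
    (Equiv.prodAssoc I ℕ ℕ).summable_iff.mpr hsumZ
  have key := tprod_split_zero' (fun y : (I × ℕ) × ℕ => gZ ℓ θ k s (Equiv.prodAssoc I ℕ ℕ y))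
    hg' (fun y => hltZ _)
  calc Zs ℓ θ k s
      = ∏' y : (I × ℕ) × ℕ, (1 - gZ ℓ θ k s (Equiv.prodAssoc I ℕ ℕ y)) :=
        ((Equiv.prodAssoc I ℕ ℕ).tprod_eq (fun x => 1 - gZ ℓ θ k s x)).symm
    _ = (∏' j : I × ℕ, (1 - gZ ℓ θ k s (Equiv.prodAssoc I ℕ ℕ (j, 0))))
        * ∏' x : (I × ℕ) × ℕ, (1 - gZ ℓ θ k s (Equiv.prodAssoc I ℕ ℕ (x.1, x.2 + 1))) := key
    _ = Sl ℓ θ k s * Zs ℓ θ (k + 2) (s + 1) := by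
        congr 1
        · rw [Sl_eq_tprod]
          refine tprod_congr fun j => ?_
          simp [gZ, gS, Equiv.prodAssoc, mul_assoc]
        · calc ∏' x : (I × ℕ) × ℕ, (1 - gZ ℓ θ k s (Equiv.prodAssoc I ℕ ℕ (x.1, x.2 + 1)))
              = ∏' x : (I × ℕ) × ℕ, (1 - gZ ℓ θ (k + 2) (s + 1) (Equiv.prodAssoc I ℕ ℕ x)) := by
                refine tprod_congr fun x => ?_
                simp only [gZ, Equiv.prodAssoc, Equiv.coe_fn_mk]
                rw [shift_q']
            _ = Zs ℓ θ (k + 2) (s + 1) :=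
                (Equiv.prodAssoc I ℕ ℕ).tprod_eq (fun x => 1 - gZ ℓ θ (k + 2) (s + 1) x)

include hℓ hmaster in
lemma Sl_step (k : ℤ) (s : ℂ) (h2 : 2 ≤ s.re) :
    Sl ℓ θ k s = Rz ℓ θ k s * Sl ℓ θ (k - 2) (s + 1) := by
  have hsumS : Summable (gS ℓ θ k s) := gS_summable ℓ θ hℓ hmaster k s h2
  have hltS := gS_norm_lt ℓ θ hℓ k s h2
  have key := tprod_split_zero' (gS ℓ θ k s) hsumS hltS
  rw [Sl_eq_tprod ℓ θ k s, key]
  congr 1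
  · refine tprod_congr fun i => ?_
    simp [gS, Rz]
  · rw [Sl_eq_tprod]
    refine tprod_congr fun y => ?_
    simp only [gS]
    rw [shift_p']

include hℓ hmaster in
lemma Sl_iter (k : ℤ) (s : ℂ) (h2 : 2 ≤ s.re) (m : ℕ) :
    Sl ℓ θ k s = (∏ l ∈ Finset.range m, Rz ℓ θ (k - 2 * (l : ℤ)) (s + (l : ℂ)))
      * Sl ℓ θ (k - 2 * (m : ℤ)) (s + (m : ℂ)) := by
  induction m with
  | zero => simp
  | succ m ih =>
      have hre : 2 ≤ (s + (m : ℂ)).re := by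
        simp only [Complex.add_re, Complex.natCast_re]
        have : (0:ℝ) ≤ (m : ℝ) := Nat.cast_nonneg m
        linarith
      rw [ih, Finset.prod_range_succ, Sl_step ℓ θ hℓ hmaster (k - 2 * (m : ℤ)) (s + (m : ℂ)) hre]
      rw [show k - 2 * (m : ℤ) - 2 = k - 2 * ((m + 1 : ℕ) : ℤ) by push_cast; ring,
        show s + (m : ℂ) + 1 = s + ((m + 1 : ℕ) : ℂ) by push_cast; ring]
      ring

private def eqvGe (n : ℕ) : ℕ ≃ {k : ℕ // n ≤ k} where
  toFun := fun p => ⟨p + n, Nat.le_add_left n p⟩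
  invFun := fun k => k.1 - n
  left_inv := fun p => by simp
  right_inv := fun k => by
    obtain ⟨k, hk⟩ := k
    simp [Nat.sub_add_cancel hk]

lemma Sl_eq_F (n : ℕ) (s : ℂ) :
    Sl ℓ θ (-2 * (n : ℤ)) (s + (n : ℂ)) =
      ∏' x : I × {k : ℕ // n ≤ k},
        (1 - Complex.exp (-((x.2 : ℕ) : ℂ) * ((ℓ x.1 : ℂ) + Complex.I * (θ x.1 : ℂ)))
           * Complex.exp (-s * (ℓ x.1 : ℂ))) := by
  rw [Sl_eq_tprod]
  rw [← ((Equiv.refl I).prodCongr (eqvGe n)).tprod_eq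
    (fun x : I × {k : ℕ // n ≤ k} =>
      (1 - Complex.exp (-((x.2 : ℕ) : ℂ) * ((ℓ x.1 : ℂ) + Complex.I * (θ x.1 : ℂ)))
        * Complex.exp (-s * (ℓ x.1 : ℂ))))]
  refine tprod_congr fun y => ?_
  simp only [gS, Equiv.prodCongr_apply, Equiv.coe_refl, Prod.map, id, eqvGe, Equiv.coe_fn_mk]
  rw [shift_F']

end params

/-- `F_n(s)² R_{ρ_{2(n−1)}}(s)` as a ratio of four Selberg zeta values. -/
theorem statement10 {I : Type*} [Countable I] (ℓ θ : I → ℝ)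
    (hℓ : ∀ i, 0 < ℓ i) (δ : ℝ) (hδ : δ < 2)
    (hsum : Summable fun i => Real.exp (-δ * ℓ i))
    (n : ℕ) (hn : 1 ≤ n) (s : ℂ) (hs : (n : ℝ) + 1 < s.re) :
    Zs ℓ θ (-2 * ((n : ℤ) - 1)) (s + (n : ℂ) + 1) ≠ 0 ∧
    Zs ℓ θ (2 * (n : ℤ)) (s - (n : ℂ) + 2) ≠ 0 ∧
    (∏' x : I × {k : ℕ // n ≤ k},
        (1 - Complex.exp (-((x.2 : ℕ) : ℂ) * ((ℓ x.1 : ℂ) + Complex.I * (θ x.1 : ℂ)))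
           * Complex.exp (-s * (ℓ x.1 : ℂ)))) ^ 2 *
      (∏ l ∈ Finset.range (2 * (n - 1) + 1),
        Rz ℓ θ (2 * ((n : ℤ) - 1) - 2 * (l : ℤ)) (s - ((n : ℂ) - 1) + (l : ℂ))) =
      (Zs ℓ θ (2 * ((n : ℤ) - 1)) (s - (n : ℂ) + 1) *
          Zs ℓ θ (-2 * (n : ℤ)) (s + (n : ℂ))) /
      (Zs ℓ θ (-2 * ((n : ℤ) - 1)) (s + (n : ℂ) + 1) *
          Zs ℓ θ (2 * (n : ℤ)) (s - (n : ℂ) + 2)) := by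
  have hmaster := master_summable' ℓ hℓ δ hδ hsum
  have hn1 : (1 : ℝ) ≤ (n : ℝ) := by exact_mod_cast hn
  have h2a : 2 ≤ (s + (n : ℂ) + 1).re := by
    simp only [Complex.add_re, Complex.natCast_re, Complex.one_re]
    linarith
  have h2b : 2 ≤ (s - (n : ℂ) + 2).re := by
    simp only [Complex.add_re, Complex.sub_re, Complex.natCast_re, Complex.re_ofNat]
    linarith
  have h2c : 2 ≤ (s - (n : ℂ) + 1).re := by
    simp only [Complex.add_re, Complex.sub_re, Complex.natCast_re, Complex.one_re]
    linarith
  have h2d : 2 ≤ (s + (n : ℂ)).re := by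
    simp only [Complex.add_re, Complex.natCast_re]
    linarith
  have hne1 := Zs_ne_zero_s10 ℓ θ hℓ hmaster (-2 * ((n : ℤ) - 1)) (s + (n : ℂ) + 1) h2a
  have hne2 := Zs_ne_zero_s10 ℓ θ hℓ hmaster (2 * (n : ℤ)) (s - (n : ℂ) + 2) h2b
  refine ⟨hne1, hne2, ?_⟩
  have hz1 := Zs_step ℓ θ hℓ hmaster (2 * ((n : ℤ) - 1)) (s - (n : ℂ) + 1) h2c
  rw [show (2 * ((n : ℤ) - 1) + 2) = 2 * (n : ℤ) by ring,
    show (s - (n : ℂ) + 1 + 1) = s - (n : ℂ) + 2 by ring] at hz1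
  have hz2 := Zs_step ℓ θ hℓ hmaster (-2 * (n : ℤ)) (s + (n : ℂ)) h2d
  rw [show (-2 * (n : ℤ) + 2) = -2 * ((n : ℤ) - 1) by ring] at hz2
  have hiter := Sl_iter ℓ θ hℓ hmaster (2 * ((n : ℤ) - 1)) (s - (n : ℂ) + 1) h2c
    (2 * (n - 1) + 1)
  have hm1 : ((2 * (n - 1) + 1 : ℕ) : ℤ) = 2 * (n : ℤ) - 1 := by omega
  have hm2 : ((2 * (n - 1) + 1 : ℕ) : ℂ) = 2 * (n : ℂ) - 1 := by
    push_cast [Nat.cast_sub hn]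
    ring
  have hc1 : 2 * ((n : ℤ) - 1) - 2 * ((2 * (n - 1) + 1 : ℕ) : ℤ) = -2 * (n : ℤ) := by
    rw [hm1]; ring
  have hc2 : s - (n : ℂ) + 1 + ((2 * (n - 1) + 1 : ℕ) : ℂ) = s + (n : ℂ) := by
    rw [hm2]; ring
  rw [hc1, hc2] at hiter
  have hF := Sl_eq_F ℓ θ n s
  have hprod : (∏ l ∈ Finset.range (2 * (n - 1) + 1),
      Rz ℓ θ (2 * ((n : ℤ) - 1) - 2 * (l : ℤ)) (s - ((n : ℂ) - 1) + (l : ℂ)))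
      = ∏ l ∈ Finset.range (2 * (n - 1) + 1),
        Rz ℓ θ (2 * ((n : ℤ) - 1) - 2 * (l : ℤ)) (s - (n : ℂ) + 1 + (l : ℂ)) :=
    Finset.prod_congr rfl fun l _ => by
      rw [show s - ((n : ℂ) - 1) + (l : ℂ) = s - (n : ℂ) + 1 + (l : ℂ) by ring]
  rw [hprod, hz1, hz2, hiter, hF, eq_div_iff (mul_ne_zero hne1 hne2)]
  ring
end
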